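/- arXiv:2404.00347 — 6 statements merged into one kernel-verified Lean document; each statement's English description precedes it below -/
import Mathlib

section
/- For d ≥ 2 there exists a constant C_d > 0 such that for all J ∈ ℝ^d and all ω ∈ S^{d-1}, the von Mises distribution satisfies 0 < M_J(ω) ≤ C_d (1 + |J|^{(d-1)/2}). -/
open MeasureTheory Metric

/-- The surface measure on the unit sphere `S^{d-1} ⊂ ℝ^d`. -/
noncomputable def sphMeasure (d : ℕ) : Measure (sphere (0 : EuclideanSpace ℝ (Fin d)) 1) :=
  (volume : Measure (EuclideanSpace ℝ (Fin d))).toSphere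

/-- Normalization constant `Z(J) = ∫_{S^{d-1}} exp(ω·J) dω`. -/
noncomputable def vonMisesZ (d : ℕ) (J : EuclideanSpace ℝ (Fin d)) : ℝ :=
  ∫ ω : sphere (0 : EuclideanSpace ℝ (Fin d)) 1,
    Real.exp (inner ℝ (ω : EuclideanSpace ℝ (Fin d)) J) ∂(sphMeasure d)

/-- The von Mises density `M_J(ω) = exp(ω·J)/Z(J)`. -/
noncomputable def vonMises (d : ℕ) (J : EuclideanSpace ℝ (Fin d))
    (ω : sphere (0 : EuclideanSpace ℝ (Fin d)) 1) : ℝ :=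
  Real.exp (inner ℝ (ω : EuclideanSpace ℝ (Fin d)) J) / vonMisesZ d J

open scoped ENNReal Pointwise


lemma aux_ineq {r n a P : ℝ} (hr0 : 0 < r) (hr1 : r ≤ 1) (hn : n ^ 2 = a ^ 2 + P)
    (hn0 : 0 < n) (hP0 : 0 ≤ P) (hP : P ≤ r ^ 2 / 64) (ha1 : 1/4 < a) (ha2 : a < 1/2) :
    (1 - r ^ 2 / 2) * n ≤ a := by
  have hr2 : r ^ 2 ≤ 1 := by nlinarith
  have hr4 : r ^ 4 ≤ r ^ 2 := by nlinarith
  have ha2' : 1/16 < a ^ 2 := by nlinarith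
  have hkey : ((1 - r ^ 2 / 2) * n) ^ 2 ≤ a ^ 2 := by
    have h1 : r ^ 4 * a ^ 2 ≤ r ^ 2 * a ^ 2 := by nlinarith [sq_nonneg a]
    have h2 : r ^ 4 * P ≤ r ^ 2 * P := by nlinarith
    have h3 : r ^ 2 / 16 < r ^ 2 * a ^ 2 := by nlinarith [sq_nonneg r, pow_pos hr0 2]
    nlinarith [hn, hP, h1, h2, h3]
  nlinarith [hkey, hn0, ha1]

lemma box_volume (d : ℕ) (i₀ : Fin d) (s : ℝ) (hs : 0 < s) :
    volume ((MeasurableEquiv.toLp 2 (Fin d → ℝ)).symm ⁻¹'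
      (Set.univ.pi fun i => if i = i₀ then Set.Ioo (1/4 : ℝ) (1/2) else Set.Ioo (-s) s))
      = ENNReal.ofReal (1/4) * ENNReal.ofReal (2*s) ^ (d - 1) := by
  rw [(EuclideanSpace.volume_preserving_symm_measurableEquiv_toLp (Fin d)).measure_preimage
    (MeasurableSet.univ_pi (fun i => by
      by_cases h : i = i₀ <;> simp [h, measurableSet_Ioo])).nullMeasurableSet]
  rw [volume_pi_pi]
  have : ∀ i : Fin d, volume (if i = i₀ then Set.Ioo (1/4 : ℝ) (1/2) else Set.Ioo (-s) s)
      = if i = i₀ then ENNReal.ofReal (1/4) else ENNReal.ofReal (2*s) := by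
    intro i
    by_cases h : i = i₀ <;> simp [h, Real.volume_Ioo]
    · rw [show (2:ℝ)⁻¹ - 4⁻¹ = 4⁻¹ by norm_num, ENNReal.ofReal_inv_of_pos (by norm_num)]; norm_num
    · rw [← two_mul, ENNReal.ofReal_mul (by norm_num)]; simp
  simp_rw [this]
  rw [← Finset.mul_prod_erase Finset.univ _ (Finset.mem_univ i₀), if_pos rfl]
  congr 1
  rw [Finset.prod_congr rfl (fun i hi => if_neg (Finset.ne_of_mem_erase hi)),
    Finset.prod_const, Finset.card_erase_of_mem (Finset.mem_univ i₀), Finset.card_univ,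
    Fintype.card_fin]

lemma cap_measure (d : ℕ) (hd : 2 ≤ d) (u : EuclideanSpace ℝ (Fin d)) (hu : ‖u‖ = 1)
    {r : ℝ} (hr0 : 0 < r) (hr1 : r ≤ 1) :
    ENNReal.ofReal ((d : ℝ) * (1/4 * (r / (4 * Real.sqrt d)) ^ (d - 1))) ≤
      sphMeasure d {ω : sphere (0 : EuclideanSpace ℝ (Fin d)) 1 |
        1 - r ^ 2 / 2 ≤ inner ℝ u (ω : EuclideanSpace ℝ (Fin d))} := by
  classical
  have hd0 : 0 < d := by omega
  set i₀ : Fin d := ⟨0, hd0⟩ with hi₀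
  -- orthonormal basis with b i₀ = u
  obtain ⟨b, hb⟩ : ∃ b : OrthonormalBasis (Fin d) ℝ (EuclideanSpace ℝ (Fin d)), b i₀ = u := by
    have hcard : Module.finrank ℝ (EuclideanSpace ℝ (Fin d)) = Fintype.card (Fin d) := by simp
    have hv : Orthonormal ℝ (Set.restrict {i₀} (fun _ : Fin d => u)) := by
      constructor
      · intro i; exact hu
      · intro i j hij
        exact absurd (Subtype.ext_iff.2 (i.2.trans j.2.symm)) hij
    obtain ⟨b, hb⟩ := hv.exists_orthonormalBasis_extension_of_card_eq hcard
    exact ⟨b, hb i₀ rfl⟩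
  set s : ℝ := r / (8 * Real.sqrt d) with hs_def
  have hsd : (0:ℝ) < Real.sqrt d := Real.sqrt_pos.2 (by exact_mod_cast hd0)
  have hs : 0 < s := div_pos hr0 (by positivity)
  set A : Set (sphere (0 : EuclideanSpace ℝ (Fin d)) 1) :=
      {ω : sphere (0 : EuclideanSpace ℝ (Fin d)) 1 |
        1 - r ^ 2 / 2 ≤ inner ℝ u (ω : EuclideanSpace ℝ (Fin d))} with hA_def
  have hAmeas : MeasurableSet A := by
    have : IsClosed A := isClosed_le continuous_const
      (Continuous.inner continuous_const continuous_subtype_val)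
    exact this.measurableSet
  have key : (b.repr ⁻¹' ((MeasurableEquiv.toLp 2 (Fin d → ℝ)).symm ⁻¹'
      (Set.univ.pi fun i => if i = i₀ then Set.Ioo (1/4 : ℝ) (1/2) else Set.Ioo (-s) s)))
      ⊆ Set.Ioo (0:ℝ) 1 • (Subtype.val '' A) := by
    intro x hx
    simp only [Set.mem_preimage, Set.mem_pi, Set.mem_univ, forall_true_left] at hx
    set y : EuclideanSpace ℝ (Fin d) := b.repr x with hy
    have hy0 : y i₀ ∈ Set.Ioo (1/4 : ℝ) (1/2) := by simpa using hx i₀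
    have hyi : ∀ i, i ≠ i₀ → |y i| < s := by
      intro i hi
      have := hx i
      rw [if_neg hi] at this
      exact abs_lt.2 ⟨this.1, this.2⟩
    -- norm of x
    have hnormsq : ‖x‖ ^ 2 = ∑ i, y i ^ 2 := by
      rw [← b.repr.norm_map x]
      rw [EuclideanSpace.norm_eq]
      rw [Real.sq_sqrt (by positivity)]
      simp [hy, Real.norm_eq_abs, sq_abs]
    have hp2 : ∑ i ∈ Finset.univ.erase i₀, y i ^ 2 ≤ r ^ 2 / 64 := by
      calc ∑ i ∈ Finset.univ.erase i₀, y i ^ 2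
          ≤ ∑ _i ∈ Finset.univ.erase i₀, s ^ 2 := by
            refine Finset.sum_le_sum fun i hi => ?_
            have := (hyi i (Finset.ne_of_mem_erase hi)).le
            calc y i ^ 2 = |y i| ^ 2 := (sq_abs _).symm
              _ ≤ s ^ 2 := by nlinarith [abs_nonneg (y i)]
        _ = (d - 1 : ℕ) * s ^ 2 := by
            rw [Finset.sum_const, Finset.card_erase_of_mem (Finset.mem_univ i₀),
              Finset.card_univ, Fintype.card_fin, nsmul_eq_mul]
        _ ≤ d * s ^ 2 := by
            have : ((d - 1 : ℕ) : ℝ) ≤ d := by exact_mod_cast Nat.sub_le d 1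
            nlinarith [sq_nonneg s]
        _ = r ^ 2 / 64 := by
            have hsq : (Real.sqrt d) ^ 2 = (d:ℝ) := Real.sq_sqrt (by positivity)
            have hdne : (d:ℝ) ≠ 0 := by positivity
            rw [hs_def, div_pow, mul_pow, hsq]
            field_simp
            ring
    have hsum_split : ‖x‖ ^ 2 = y i₀ ^ 2 + ∑ i ∈ Finset.univ.erase i₀, y i ^ 2 := by
      rw [hnormsq, ← Finset.add_sum_erase Finset.univ _ (Finset.mem_univ i₀)]
    have hxnorm_pos : 0 < ‖x‖ := by
      have h1 : (1/4 : ℝ) < y i₀ := hy0.1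
      nlinarith [Finset.sum_nonneg (fun i (_ : i ∈ Finset.univ.erase i₀) => sq_nonneg (y i)),
        norm_nonneg x]
    have hxnorm_lt : ‖x‖ < 1 := by
      nlinarith [hy0.1, hy0.2, norm_nonneg x, hr1, hr0]
    -- the direction
    refine ⟨‖x‖, ⟨hxnorm_pos, hxnorm_lt⟩, (‖x‖⁻¹ • x : EuclideanSpace ℝ (Fin d)), ?_, ?_⟩
    · refine ⟨⟨‖x‖⁻¹ • x, ?_⟩, ?_, rfl⟩
      · simp [mem_sphere_zero_iff_norm, norm_smul, abs_of_pos (inv_pos.2 hxnorm_pos),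
          inv_mul_cancel₀ hxnorm_pos.ne']
      · -- membership in A
        show 1 - r ^ 2 / 2 ≤ inner ℝ u (‖x‖⁻¹ • x : EuclideanSpace ℝ (Fin d))
        have hinner : (inner ℝ u x : ℝ) = y i₀ := by
          rw [← hb, ← OrthonormalBasis.repr_apply_apply]
        rw [real_inner_smul_right, hinner]
        have hkey : (1 - r ^ 2 / 2) * ‖x‖ ≤ y i₀ :=
          aux_ineq hr0 hr1 hsum_split hxnorm_pos
            (Finset.sum_nonneg (fun i (_ : i ∈ Finset.univ.erase i₀) => sq_nonneg (y i)))
            hp2 hy0.1 hy0.2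
        rw [inv_mul_eq_div, le_div_iff₀ hxnorm_pos]
        exact hkey
    · simp [smul_smul, mul_inv_cancel₀ hxnorm_pos.ne']
  -- now the measure computation
  rw [show sphMeasure d = (volume : Measure (EuclideanSpace ℝ (Fin d))).toSphere from rfl,
    Measure.toSphere_apply' (volume : Measure (EuclideanSpace ℝ (Fin d))) hAmeas]
  have hvol : ENNReal.ofReal (1/4 * (r / (4 * Real.sqrt d)) ^ (d - 1)) ≤
      volume (Set.Ioo (0:ℝ) 1 • (Subtype.val '' A)) := by
    have hmp := b.measurePreserving_repr
    have h1 : volume (b.repr ⁻¹' ((MeasurableEquiv.toLp 2 (Fin d → ℝ)).symm ⁻¹'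
        (Set.univ.pi fun i => if i = i₀ then Set.Ioo (1/4 : ℝ) (1/2) else Set.Ioo (-s) s)))
        = ENNReal.ofReal (1/4) * ENNReal.ofReal (2*s) ^ (d - 1) := by
      rw [hmp.measure_preimage]
      · exact box_volume d i₀ s hs
      · exact ((MeasurableEquiv.toLp 2 (Fin d → ℝ)).symm.measurable
          (MeasurableSet.univ_pi (fun i => by
            by_cases h : i = i₀ <;> simp [h, measurableSet_Ioo]))).nullMeasurableSet
    calc ENNReal.ofReal (1/4 * (r / (4 * Real.sqrt d)) ^ (d - 1))
        = ENNReal.ofReal (1/4) * ENNReal.ofReal (2*s) ^ (d - 1) := by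
          rw [ENNReal.ofReal_mul (by norm_num), ← ENNReal.ofReal_pow (by positivity)]
          congr 3
          rw [hs_def]; field_simp; ring
      _ = _ := h1.symm
      _ ≤ volume (Set.Ioo (0:ℝ) 1 • (Subtype.val '' A)) := measure_mono key
  calc ENNReal.ofReal ((d : ℝ) * (1/4 * (r / (4 * Real.sqrt d)) ^ (d - 1)))
      = (d : ℝ≥0∞) * ENNReal.ofReal (1/4 * (r / (4 * Real.sqrt d)) ^ (d - 1)) := by
        rw [ENNReal.ofReal_mul (by positivity), ENNReal.ofReal_natCast]
    _ ≤ (d : ℝ≥0∞) * volume (Set.Ioo (0:ℝ) 1 • (Subtype.val '' A)) := by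
        exact mul_le_mul_right hvol _
    _ = _ := by
        congr 1
        simp

instance (d : ℕ) : IsFiniteMeasure (sphMeasure d) := by
  unfold sphMeasure; infer_instance

lemma vm_integrable (d : ℕ) (J : EuclideanSpace ℝ (Fin d)) :
    Integrable (fun ω : sphere (0 : EuclideanSpace ℝ (Fin d)) 1 =>
      Real.exp (inner ℝ (ω : EuclideanSpace ℝ (Fin d)) J)) (sphMeasure d) := by
  have hc : Continuous (fun ω : sphere (0 : EuclideanSpace ℝ (Fin d)) 1 =>
      Real.exp (inner ℝ (ω : EuclideanSpace ℝ (Fin d)) J)) :=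
    (continuous_subtype_val.inner continuous_const).rexp
  have := (hc.locallyIntegrable (μ := sphMeasure d)).integrableOn_isCompact isCompact_univ
  rwa [integrableOn_univ] at this

lemma sph_univ_pos (d : ℕ) (hd : 1 ≤ d) : 0 < (sphMeasure d Set.univ).toReal := by
  rw [sphMeasure, Measure.toSphere_apply_univ]
  have h1 : (0:ℝ≥0∞) < volume (ball (0 : EuclideanSpace ℝ (Fin d)) 1) :=
    measure_ball_pos _ _ one_pos
  have h2 : volume (ball (0 : EuclideanSpace ℝ (Fin d)) 1) < ⊤ := measure_ball_lt_top
  have hdim : (Module.finrank ℝ (EuclideanSpace ℝ (Fin d)) : ℝ≥0∞) ≠ 0 := by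
    have : Module.finrank ℝ (EuclideanSpace ℝ (Fin d)) = d := by simp
    simp [this]; omega
  refine ENNReal.toReal_pos ?_ ?_
  · exact mul_ne_zero hdim h1.ne'
  · exact (ENNReal.mul_lt_top (ENNReal.natCast_lt_top _) h2).ne

lemma Z_lower (d : ℕ) (J : EuclideanSpace ℝ (Fin d)) {A : Set (sphere (0 : EuclideanSpace ℝ (Fin d)) 1)}
    (hA : MeasurableSet A) {c : ℝ}
    (hc : ∀ ω ∈ A, c ≤ inner ℝ (ω : EuclideanSpace ℝ (Fin d)) J) :
    Real.exp c * (sphMeasure d A).toReal ≤ vonMisesZ d J := by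
  have hint := vm_integrable d J
  have h1 : Real.exp c * (sphMeasure d A).toReal ≤
      ∫ ω in A, Real.exp (inner ℝ (ω : EuclideanSpace ℝ (Fin d)) J) ∂(sphMeasure d) := by
    refine setIntegral_ge_of_const_le_real hA (measure_ne_top _ _) ?_ hint.integrableOn
    exact fun ω hω => Real.exp_le_exp.2 (hc ω hω)
  refine h1.trans (setIntegral_le_integral hint ?_)
  exact Filter.Eventually.of_forall fun ω => (Real.exp_pos _).le

/-- For `d ≥ 2` there is `C_d > 0` such that for all `J` and all `ω ∈ S^{d-1}`,
`0 < M_J(ω) ≤ C_d (1 + |J|^{(d-1)/2})`. -/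
theorem vonMises_upper_bound (d : ℕ) (hd : 2 ≤ d) :
    ∃ C : ℝ, 0 < C ∧ ∀ (J : EuclideanSpace ℝ (Fin d))
      (ω : sphere (0 : EuclideanSpace ℝ (Fin d)) 1),
      0 < vonMises d J ω ∧
      vonMises d J ω ≤ C * (1 + ‖J‖ ^ (((d : ℝ) - 1) / 2)) := by
  classical
  have hd0 : 0 < d := by omega
  set V : ℝ := (sphMeasure d Set.univ).toReal with hV_def
  have hV : 0 < V := sph_univ_pos d (by omega)
  set K : ℝ := (d : ℝ) * (1/4 * (1 / (4 * Real.sqrt d)) ^ (d - 1)) with hK_def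
  have hsd : (0:ℝ) < Real.sqrt d := Real.sqrt_pos.2 (by exact_mod_cast hd0)
  have hK : 0 < K := by positivity
  set e : ℝ := ((d : ℝ) - 1) / 2 with he_def
  have he0 : 0 ≤ e := by
    have : (1:ℝ) ≤ (d:ℝ) := by exact_mod_cast hd0
    rw [he_def]; linarith
  refine ⟨max (Real.exp 1 / K) (Real.exp 4 / V), lt_max_of_lt_left (by positivity), ?_⟩
  intro J ω
  set C : ℝ := max (Real.exp 1 / K) (Real.exp 4 / V) with hC_def
  have hC : 0 < C := lt_max_of_lt_left (by positivity)
  -- Z is always positive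
  have hZpos : 0 < vonMisesZ d J := by
    have h1 : Real.exp (-‖J‖) * V ≤ vonMisesZ d J := by
      refine Z_lower d J MeasurableSet.univ fun ω' _ => ?_
      have := abs_real_inner_le_norm (ω' : EuclideanSpace ℝ (Fin d)) J
      have hω' : ‖(ω' : EuclideanSpace ℝ (Fin d))‖ = 1 := mem_sphere_zero_iff_norm.1 ω'.2
      rw [hω', one_mul] at this
      linarith [neg_abs_le (inner ℝ (ω' : EuclideanSpace ℝ (Fin d)) J : ℝ)]
    calc (0:ℝ) < Real.exp (-‖J‖) * V := by positivity
      _ ≤ _ := h1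
  have hMpos : 0 < vonMises d J ω := div_pos (Real.exp_pos _) hZpos
  refine ⟨hMpos, ?_⟩
  have hrpow_nonneg : (0:ℝ) ≤ ‖J‖ ^ e := Real.rpow_nonneg (norm_nonneg J) _
  have hinner_le : (inner ℝ (ω : EuclideanSpace ℝ (Fin d)) J : ℝ) ≤ ‖J‖ := by
    have := real_inner_le_norm (ω : EuclideanSpace ℝ (Fin d)) J
    have hω : ‖(ω : EuclideanSpace ℝ (Fin d))‖ = 1 := mem_sphere_zero_iff_norm.1 ω.2
    rw [hω, one_mul] at this; exact this
  rcases le_or_gt ‖J‖ 2 with hJ | hJ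
  · -- small J
    have hZ : Real.exp (-2) * V ≤ vonMisesZ d J := by
      refine Z_lower d J MeasurableSet.univ fun ω' _ => ?_
      have := abs_real_inner_le_norm (ω' : EuclideanSpace ℝ (Fin d)) J
      have hω' : ‖(ω' : EuclideanSpace ℝ (Fin d))‖ = 1 := mem_sphere_zero_iff_norm.1 ω'.2
      rw [hω', one_mul] at this
      have := neg_abs_le (inner ℝ (ω' : EuclideanSpace ℝ (Fin d)) J : ℝ)
      linarith
    have h1 : vonMises d J ω ≤ Real.exp 2 / (Real.exp (-2) * V) := by
      rw [vonMises]
      refine div_le_div₀ (by positivity) ?_ (by positivity) hZ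
      exact Real.exp_le_exp.2 (hinner_le.trans hJ)
    have h2 : Real.exp 2 / (Real.exp (-2) * V) = Real.exp 4 / V := by
      rw [div_mul_eq_div_div, ← Real.exp_sub]; norm_num
    calc vonMises d J ω ≤ Real.exp 4 / V := by rw [← h2]; exact h1
      _ ≤ C := le_max_right _ _
      _ ≤ C * (1 + ‖J‖ ^ e) := by nlinarith
  · -- large J
    have hJ0 : (0:ℝ) < ‖J‖ := by linarith
    have hJne : J ≠ 0 := by
      intro h; rw [h, norm_zero] at hJ0; exact lt_irrefl _ hJ0
    set u : EuclideanSpace ℝ (Fin d) := ‖J‖⁻¹ • J with hu_def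
    have hu : ‖u‖ = 1 := norm_smul_inv_norm hJne
    set r : ℝ := Real.sqrt (2 / ‖J‖) with hr_def
    have hq0 : (0:ℝ) ≤ 2 / ‖J‖ := by positivity
    have hr0 : 0 < r := Real.sqrt_pos.2 (by positivity)
    have hr1 : r ≤ 1 := by
      rw [hr_def, show (1:ℝ) = Real.sqrt 1 from (Real.sqrt_one).symm]
      exact Real.sqrt_le_sqrt (by rw [div_le_one hJ0]; linarith)
    have hr2 : r ^ 2 = 2 / ‖J‖ := Real.sq_sqrt hq0
    set A : Set (sphere (0 : EuclideanSpace ℝ (Fin d)) 1) :=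
        {ω' : sphere (0 : EuclideanSpace ℝ (Fin d)) 1 |
          1 - r ^ 2 / 2 ≤ inner ℝ u (ω' : EuclideanSpace ℝ (Fin d))} with hA_def
    have hAmeas : MeasurableSet A :=
      (isClosed_le continuous_const
        (Continuous.inner continuous_const continuous_subtype_val)).measurableSet
    -- lower bound for Z
    have hZ1 : Real.exp (‖J‖ - 1) * (sphMeasure d A).toReal ≤ vonMisesZ d J := by
      refine Z_lower d J hAmeas fun ω' hω' => ?_
      have h1 : 1 - r ^ 2 / 2 ≤ inner ℝ u (ω' : EuclideanSpace ℝ (Fin d)) := hω'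
      have h2 : (inner ℝ (ω' : EuclideanSpace ℝ (Fin d)) J : ℝ)
          = ‖J‖ * inner ℝ u (ω' : EuclideanSpace ℝ (Fin d)) := by
        rw [hu_def, real_inner_smul_left, real_inner_comm]
        field_simp
      rw [h2]
      calc ‖J‖ - 1 = ‖J‖ * (1 - r ^ 2 / 2) := by rw [hr2]; field_simp
        _ ≤ _ := mul_le_mul_of_nonneg_left h1 hJ0.le
    -- lower bound for the cap measure
    have hcap := cap_measure d hd u hu hr0 hr1
    have hA1 : K * r ^ (d - 1) ≤ (sphMeasure d A).toReal := by
      have h1 : (d : ℝ) * (1/4 * (r / (4 * Real.sqrt d)) ^ (d - 1)) = K * r ^ (d - 1) := by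
        rw [hK_def, div_pow, div_pow, one_pow]
        ring
      have h2 := ENNReal.toReal_mono (measure_ne_top _ _) hcap
      rwa [ENNReal.toReal_ofReal (by positivity), h1] at h2
    -- rewrite r ^ (d-1) via rpow
    have hrpow : r ^ (d - 1) = (2 / ‖J‖) ^ e := by
      rw [hr_def, Real.sqrt_eq_rpow, ← Real.rpow_natCast ((2 / ‖J‖) ^ (1/(2:ℝ))) (d-1),
        ← Real.rpow_mul hq0]
      congr 1
      rw [he_def, Nat.cast_sub (by omega : 1 ≤ d)]
      push_cast
      ring
    have h4 : (2 / ‖J‖) ^ e = 2 ^ e / ‖J‖ ^ e := Real.div_rpow (by norm_num) (norm_nonneg J) e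
    have h5 : (1:ℝ) ≤ (2:ℝ) ^ e := Real.one_le_rpow one_le_two he0
    have hJe : 0 < ‖J‖ ^ e := Real.rpow_pos_of_pos hJ0 e
    have hA2 : K / ‖J‖ ^ e ≤ K * r ^ (d - 1) := by
      rw [hrpow, h4]
      rw [div_le_iff₀ hJe] at *
      calc K = K * 1 := (mul_one K).symm
        _ ≤ K * (2 ^ e / ‖J‖ ^ e * ‖J‖ ^ e) := by
            rw [div_mul_cancel₀ _ hJe.ne']
            exact mul_le_mul_of_nonneg_left h5 hK.le
        _ = K * (2 ^ e / ‖J‖ ^ e) * ‖J‖ ^ e := by ring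
    have hZ2 : Real.exp (‖J‖ - 1) * (K / ‖J‖ ^ e) ≤ vonMisesZ d J := by
      refine le_trans ?_ hZ1
      refine mul_le_mul_of_nonneg_left (hA2.trans hA1) (Real.exp_pos _).le
    have hZlb : (0:ℝ) < Real.exp (‖J‖ - 1) * (K / ‖J‖ ^ e) := by positivity
    have h6 : vonMises d J ω ≤ Real.exp ‖J‖ / (Real.exp (‖J‖ - 1) * (K / ‖J‖ ^ e)) := by
      rw [vonMises]
      exact div_le_div₀ (Real.exp_pos _).le (Real.exp_le_exp.2 hinner_le) hZlb hZ2
    have h7 : Real.exp ‖J‖ / (Real.exp (‖J‖ - 1) * (K / ‖J‖ ^ e))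
        = Real.exp 1 / K * ‖J‖ ^ e := by
      rw [div_mul_eq_div_div, ← Real.exp_sub, show ‖J‖ - (‖J‖ - 1) = 1 by ring,
        div_div_eq_mul_div]
      ring
    have h8 : Real.exp 1 / K ≤ C := le_max_left _ _
    calc vonMises d J ω ≤ Real.exp 1 / K * ‖J‖ ^ e := by rw [← h7]; exact h6
      _ ≤ C * (1 + ‖J‖ ^ e) := by nlinarith [hrpow_nonneg, hC, h8]
end

section
/- For 𝒥 ∈ ℝ^d satisfying the consistency relation 𝒥 = μ ∫_{S^{d-1}} ω M_𝒥 dω with |𝒥| > 0, and z a unit vector orthogonal to 𝒥 that lies in the nullspace of C_𝒥 := μ ∫ ω ⊗ ∇_J M_𝒥 dω − Id, one has ∫_{S^{d-1}} (ω·z)^2 M_𝒥(ω) dω = 1/μ. -/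
open MeasureTheory Metric

/-- The matrix `C_𝒥 := μ ∫ ω ⊗ ∇_J M_𝒥 dω − Id`. -/
noncomputable def Cmat (d : ℕ) (μ : ℝ) (𝒥 : EuclideanSpace ℝ (Fin d)) :
    Matrix (Fin d) (Fin d) ℝ := fun i j =>
  μ * (∫ ω : sphere (0 : EuclideanSpace ℝ (Fin d)) 1,
      (ω : EuclideanSpace ℝ (Fin d)) i *
        (gradient (fun J => vonMises d J ω) 𝒥) j ∂(sphMeasure d)) -
    (if i = j then 1 else 0)

section helpers

set_option synthInstance.maxHeartbeats 1000000
set_option maxHeartbeats 1000000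

variable {d : ℕ}

noncomputable abbrev Esp (d : ℕ) := EuclideanSpace ℝ (Fin d)
noncomputable abbrev Ssp (d : ℕ) := sphere (0 : Esp d) 1

instance : IsFiniteMeasure (sphMeasure d) := by unfold sphMeasure; infer_instance

lemma cont_integrable {G : Type*} [NormedAddCommGroup G] {f : Ssp d → G}
    (hf : Continuous f) : Integrable f (sphMeasure d) := by
  exact hf.integrable_of_hasCompactSupport
    (IsCompact.of_isClosed_subset isCompact_univ (isClosed_tsupport f) (Set.subset_univ _))

lemma contω {J : Esp d} : Continuous (fun ω : Ssp d => Real.exp (inner ℝ (ω : Esp d) J)) :=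
  Real.continuous_exp.comp ((continuous_subtype_val.inner continuous_const))

lemma hasFDerivZ (𝒥 : Esp d) :
    HasFDerivAt (vonMisesZ d)
      (∫ ω : Ssp d, Real.exp (inner ℝ (ω : Esp d) 𝒥) • innerSL ℝ (ω : Esp d) ∂(sphMeasure d)) 𝒥 := by
  have key : ∀ (x : Esp d) (ω : Ssp d),
      HasFDerivAt (fun J : Esp d => Real.exp (inner ℝ (ω : Esp d) J))
        (Real.exp (inner ℝ (ω : Esp d) x) • innerSL ℝ (ω : Esp d)) x := by
    intro x ω
    exact (innerSL ℝ (ω : Esp d)).hasFDerivAt.exp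
  apply hasFDerivAt_integral_of_dominated_of_fderiv_le (s := ball 𝒥 1)
    (bound := fun _ => Real.exp (‖𝒥‖ + 1))
    (F' := fun x (ω : Ssp d) => Real.exp (inner ℝ (ω : Esp d) x) • innerSL ℝ (ω : Esp d)) (ball_mem_nhds 𝒥 one_pos)
  · exact Filter.Eventually.of_forall fun x => contω.aestronglyMeasurable
  · exact cont_integrable contω
  · refine Continuous.aestronglyMeasurable ?_
    exact (contω (J := 𝒥)).smul ((innerSL ℝ).continuous.comp continuous_subtype_val)
  · refine Filter.Eventually.of_forall fun ω => fun x hx => ?_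
    have h1 : ‖innerSL ℝ (ω : Esp d)‖ ≤ 1 := by
      rw [innerSL_apply_norm]
      simpa using ω.2.le
    have h2 : Real.exp (inner ℝ (ω : Esp d) x) ≤ Real.exp (‖𝒥‖ + 1) := by
      apply Real.exp_le_exp.2
      calc inner ℝ (ω : Esp d) x ≤ ‖(ω : Esp d)‖ * ‖x‖ := real_inner_le_norm _ _
        _ ≤ 1 * ‖x‖ := by
            have : ‖(ω : Esp d)‖ ≤ 1 := by simpa using ω.2.le
            exact mul_le_mul_of_nonneg_right this (norm_nonneg _)
        _ = ‖x‖ := one_mul _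
        _ ≤ ‖𝒥‖ + 1 := by
            have := mem_ball_iff_norm.mp hx
            have := norm_le_norm_add_norm_sub' x 𝒥
            linarith
    calc ‖Real.exp (inner ℝ (ω : Esp d) x) • innerSL ℝ (ω : Esp d)‖
        ≤ ‖Real.exp (inner ℝ (ω : Esp d) x)‖ * ‖innerSL ℝ (ω : Esp d)‖ :=
          ContinuousLinearMap.opNorm_smul_le _ _
      _ = Real.exp (inner ℝ (ω : Esp d) x) * ‖innerSL ℝ (ω : Esp d)‖ := by
          rw [Real.norm_eq_abs, abs_of_pos (Real.exp_pos _)]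
      _ ≤ Real.exp (‖𝒥‖ + 1) * 1 := mul_le_mul h2 h1 (norm_nonneg _) (Real.exp_pos _).le
      _ = _ := mul_one _
  · exact integrable_const _
  · exact Filter.Eventually.of_forall fun ω x _ => key x ω

/-- The (unnormalized) mean vector `∫ exp(ω·𝒥) • ω`. -/
noncomputable def mVec (d : ℕ) (𝒥 : Esp d) : Esp d :=
  ∫ ω : Ssp d, Real.exp (inner ℝ (ω : Esp d) 𝒥) • (ω : Esp d) ∂sphMeasure d

lemma integrable_expSmul (𝒥 : Esp d) :
    Integrable (fun ω : Ssp d => Real.exp (inner ℝ (ω : Esp d) 𝒥) • (ω : Esp d)) (sphMeasure d) :=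
  cont_integrable (contω.smul continuous_subtype_val)

lemma integrable_expSL (𝒥 : Esp d) :
    Integrable (fun ω : Ssp d => Real.exp (inner ℝ (ω : Esp d) 𝒥) • innerSL ℝ (ω : Esp d))
      (sphMeasure d) :=
  cont_integrable (contω.smul ((innerSL ℝ).continuous.comp continuous_subtype_val))

lemma DZ_apply (𝒥 v : Esp d) :
    (∫ ω : Ssp d, Real.exp (inner ℝ (ω : Esp d) 𝒥) • innerSL ℝ (ω : Esp d) ∂sphMeasure d) v
      = inner ℝ (mVec d 𝒥) v := by
  rw [ContinuousLinearMap.integral_apply (integrable_expSL 𝒥) v]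
  rw [real_inner_comm, mVec, ← integral_inner (integrable_expSmul 𝒥) v]
  congr 1; ext ω
  simp [real_inner_smul_right, real_inner_comm, Finset.mul_sum]

lemma hasGradientM (𝒥 : Esp d) (hZ : vonMisesZ d 𝒥 ≠ 0) (ω : Ssp d) :
    HasGradientAt (fun J => vonMises d J ω)
      (vonMises d 𝒥 ω • (ω : Esp d) - (vonMises d 𝒥 ω / vonMisesZ d 𝒥) • mVec d 𝒥) 𝒥 := by
  rw [hasGradientAt_iff_hasFDerivAt]
  have hnum : HasFDerivAt (fun J : Esp d => Real.exp (inner ℝ (ω : Esp d) J))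
      (Real.exp (inner ℝ (ω : Esp d) 𝒥) • innerSL ℝ (ω : Esp d)) 𝒥 :=
    (innerSL ℝ (ω : Esp d)).hasFDerivAt.exp
  have hden := hasFDerivZ 𝒥
  have hinv : HasFDerivAt (fun J => (vonMisesZ d J)⁻¹)
      ((-(vonMisesZ d 𝒥 ^ 2)⁻¹) •
        (∫ ω : Ssp d, Real.exp (inner ℝ (ω : Esp d) 𝒥) • innerSL ℝ (ω : Esp d) ∂sphMeasure d)) 𝒥 :=
    (hasDerivAt_inv hZ).comp_hasFDerivAt 𝒥 hden
  have hmul := hnum.mul hinv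
  have : (fun J => Real.exp (inner ℝ (ω : Esp d) J) * (vonMisesZ d J)⁻¹)
      = fun J => vonMises d J ω := by
    ext J; simp [vonMises, div_eq_mul_inv]
  rw [show ((fun J : Esp d => Real.exp (inner ℝ (ω : Esp d) J)) * fun J => (vonMisesZ d J)⁻¹) = fun J => Real.exp (inner ℝ (ω : Esp d) J) * (vonMisesZ d J)⁻¹ from rfl, this] at hmul
  refine hmul.congr_fderiv (Eq.symm ?_)
  ext v
  rw [ContinuousLinearMap.add_apply, ContinuousLinearMap.smul_apply,
    ContinuousLinearMap.smul_apply, ContinuousLinearMap.smul_apply]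
  rw [InnerProductSpace.toDual_apply_apply]
  rw [inner_sub_left, real_inner_smul_left, real_inner_smul_left]
  rw [DZ_apply]
  simp only [ContinuousLinearMap.smul_apply, innerSL_apply_apply, smul_eq_mul, vonMises]
  field_simp
  ring

end helpers

section helpers2
set_option synthInstance.maxHeartbeats 1000000
set_option maxHeartbeats 1000000
variable {d : ℕ}

lemma inner_eq_sum (x y : Esp d) : (inner ℝ x y : ℝ) = ∑ i, x i * y i := by
  simp [PiLp.inner_apply, RCLike.inner_apply]
  exact Finset.sum_congr rfl fun i _ => mul_comm _ _

lemma contCoord (i : Fin d) : Continuous (fun ω : Ssp d => (ω : Esp d) i) :=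
  (EuclideanSpace.proj i).continuous.comp continuous_subtype_val

lemma contM (𝒥 : Esp d) : Continuous (fun ω : Ssp d => vonMises d 𝒥 ω) :=
  contω.div_const _

end helpers2

set_option synthInstance.maxHeartbeats 1000000
set_option maxHeartbeats 1000000

/-- For an equilibrium flux `𝒥 ≠ 0` and a unit vector `z ⊥ 𝒥` in the nullspace of `C_𝒥`,
one has `∫ (ω·z)² M_𝒥 dω = 1/μ`. -/
theorem transverse_second_moment (d : ℕ) (hd : 2 ≤ d) (μ : ℝ) (hμ : 0 < μ)
    (𝒥 : EuclideanSpace ℝ (Fin d)) (h𝒥 : 0 < ‖𝒥‖)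
    (hcons : 𝒥 = μ • ∫ ω : sphere (0 : EuclideanSpace ℝ (Fin d)) 1,
        vonMises d 𝒥 ω • (ω : EuclideanSpace ℝ (Fin d)) ∂(sphMeasure d))
    (z : EuclideanSpace ℝ (Fin d)) (hz : ‖z‖ = 1)
    (hperp : inner ℝ z 𝒥 = (0 : ℝ))
    (hnull : (Cmat d μ 𝒥).mulVec (fun i => z i) = 0) :
    (∫ ω : sphere (0 : EuclideanSpace ℝ (Fin d)) 1,
        (inner ℝ (ω : EuclideanSpace ℝ (Fin d)) z : ℝ) ^ 2 * vonMises d 𝒥 ω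
          ∂(sphMeasure d)) = 1 / μ := by
  classical
  -- Step 1 : Z ≠ 0
  have hZ : vonMisesZ d 𝒥 ≠ 0 := by
    intro h
    have h0 : (fun ω : Ssp d => vonMises d 𝒥 ω • (ω : Esp d)) = fun _ => (0 : Esp d) := by
      funext ω; simp [vonMises, h]
    rw [h0, integral_const] at hcons
    simp at hcons
    rw [hcons] at h𝒥
    simp at h𝒥
  -- Step 2 : consistency in terms of mVec
  have hIm : (∫ ω : Ssp d, vonMises d 𝒥 ω • (ω : Esp d) ∂(sphMeasure d))
      = (vonMisesZ d 𝒥)⁻¹ • mVec d 𝒥 := by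
    rw [mVec, ← integral_smul]
    congr 1; funext ω
    simp [vonMises, div_eq_inv_mul, smul_smul]
  -- Step 3 : m ⊥ z
  have hmz : inner ℝ (mVec d 𝒥) z = (0 : ℝ) := by
    have h1 : (inner ℝ z 𝒥 : ℝ) = μ * ((vonMisesZ d 𝒥)⁻¹ * inner ℝ z (mVec d 𝒥)) := by
      conv_lhs => rw [hcons]
      rw [hIm, real_inner_smul_right, real_inner_smul_right]
    rw [hperp] at h1
    have h2 : (inner ℝ z (mVec d 𝒥) : ℝ) = 0 := by
      rcases mul_eq_zero.mp h1.symm with h | h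
      · exact absurd h hμ.ne'
      · rcases mul_eq_zero.mp h with h' | h'
        · exact absurd h' (inv_ne_zero hZ)
        · exact h'
    rw [real_inner_comm]; exact h2
  -- Step 4 : gradient formula
  have hgrad : ∀ ω : Ssp d, gradient (fun J => vonMises d J ω) 𝒥
      = vonMises d 𝒥 ω • (ω : Esp d) - (vonMises d 𝒥 ω / vonMisesZ d 𝒥) • mVec d 𝒥 :=
    fun ω => (hasGradientM 𝒥 hZ ω).gradient
  set g : Ssp d → ℝ := fun ω => vonMises d 𝒥 ω * inner ℝ (ω : Esp d) z with hg
  have contg : Continuous g := (contM 𝒥).mul (continuous_subtype_val.inner continuous_const)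
  -- Step 5 : pointwise sum identity
  have hsum : ∀ ω : Ssp d, ∑ j, (gradient (fun J => vonMises d J ω) 𝒥) j * z j = g ω := by
    intro ω
    have hco : ∀ j, (gradient (fun J => vonMises d J ω) 𝒥) j
        = vonMises d 𝒥 ω * (ω : Esp d) j - (vonMises d 𝒥 ω / vonMisesZ d 𝒥) * (mVec d 𝒥) j := by
      intro j; rw [hgrad ω]; simp [PiLp.smul_apply, PiLp.sub_apply]
    have h1 : ∑ j, (ω : Esp d) j * z j = (inner ℝ (ω : Esp d) z : ℝ) := (inner_eq_sum _ _).symm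
    have h2 : ∑ j, (mVec d 𝒥) j * z j = (0 : ℝ) := by rw [← inner_eq_sum]; exact hmz
    calc ∑ j, (gradient (fun J => vonMises d J ω) 𝒥) j * z j
        = ∑ j, (vonMises d 𝒥 ω * ((ω : Esp d) j * z j)
            - (vonMises d 𝒥 ω / vonMisesZ d 𝒥) * ((mVec d 𝒥) j * z j)) :=
          Finset.sum_congr rfl fun j _ => by rw [hco j]; ring
      _ = vonMises d 𝒥 ω * ∑ j, (ω : Esp d) j * z j
            - (vonMises d 𝒥 ω / vonMisesZ d 𝒥) * ∑ j, (mVec d 𝒥) j * z j := by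
          rw [Finset.sum_sub_distrib, Finset.mul_sum, Finset.mul_sum]
      _ = g ω := by rw [h1, h2, hg]; ring
  -- Step 6 : componentwise consequence of the nullspace condition
  have hi : ∀ i, μ * (∫ ω : Ssp d, (ω : Esp d) i * g ω ∂(sphMeasure d)) = z i := by
    intro i
    have h0 := congrFun hnull i
    simp only [Matrix.mulVec, dotProduct, Cmat, Pi.zero_apply] at h0
    have e1 : ∀ j : Fin d,
        (μ * (∫ ω : Ssp d, (ω : Esp d) i *
            (gradient (fun J => vonMises d J ω) 𝒥) j ∂(sphMeasure d)) -
          (if i = j then 1 else 0)) * z j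
        = μ * ((∫ ω : Ssp d, (ω : Esp d) i *
            (gradient (fun J => vonMises d J ω) 𝒥) j ∂(sphMeasure d)) * z j) -
          (if i = j then z j else 0) := by
      intro j; by_cases h : i = j <;> simp [h] <;> ring
    rw [Finset.sum_congr rfl (fun j _ => e1 j), Finset.sum_sub_distrib,
      Finset.sum_ite_eq, if_pos (Finset.mem_univ i), ← Finset.mul_sum, sub_eq_zero] at h0
    rw [← h0]
    congr 1
    -- ∑ j (∫ ωᵢ ∂ⱼM) zⱼ = ∫ ωᵢ g
    have e2 : ∀ j : Fin d,
        (∫ ω : Ssp d, (ω : Esp d) i *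
            (gradient (fun J => vonMises d J ω) 𝒥) j ∂(sphMeasure d)) * z j
        = ∫ ω : Ssp d, ((ω : Esp d) i *
            (gradient (fun J => vonMises d J ω) 𝒥) j) * z j ∂(sphMeasure d) := by
      intro j; rw [integral_mul_const]
    rw [Finset.sum_congr rfl (fun j _ => e2 j), ← integral_finset_sum]
    · congr 1; funext ω
      have : ∑ j, ((ω : Esp d) i * (gradient (fun J => vonMises d J ω) 𝒥) j) * z j
          = (ω : Esp d) i * ∑ j, (gradient (fun J => vonMises d J ω) 𝒥) j * z j := by
        rw [Finset.mul_sum]; exact Finset.sum_congr rfl fun j _ => by ring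
      rw [this, hsum ω]
    · intro j _
      have hcongr : (fun ω : Ssp d => ((ω : Esp d) i *
          (gradient (fun J => vonMises d J ω) 𝒥) j) * z j)
          = fun ω : Ssp d => ((ω : Esp d) i *
            (vonMises d 𝒥 ω * (ω : Esp d) j
              - (vonMises d 𝒥 ω / vonMisesZ d 𝒥) * (mVec d 𝒥) j)) * z j := by
        funext ω; rw [hgrad ω]; simp [PiLp.smul_apply, PiLp.sub_apply]
      rw [hcongr]
      apply cont_integrable
      exact (((contCoord i).mul (((contM 𝒥).mul (contCoord j)).sub
        (((contM 𝒥).div_const _).mul continuous_const))).mul continuous_const)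
  -- Step 7 : contract with z
  have hfin : μ * (∫ ω : Ssp d, (inner ℝ (ω : Esp d) z : ℝ) ^ 2 * vonMises d 𝒥 ω ∂(sphMeasure d))
      = 1 := by
    have hs : ∑ i, z i * (μ * ∫ ω : Ssp d, (ω : Esp d) i * g ω ∂(sphMeasure d)) = 1 := by
      rw [Finset.sum_congr rfl (fun i _ => by rw [hi i]), ← inner_eq_sum,
        real_inner_self_eq_norm_sq, hz]
      norm_num
    have e4 : ∀ i : Fin d, z i * (μ * ∫ ω : Ssp d, (ω : Esp d) i * g ω ∂(sphMeasure d))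
        = μ * ∫ ω : Ssp d, z i * ((ω : Esp d) i * g ω) ∂(sphMeasure d) := by
      intro i; rw [integral_const_mul]; ring
    rw [Finset.sum_congr rfl (fun i _ => e4 i), ← Finset.mul_sum, ← integral_finset_sum] at hs
    · have h6 : (∫ ω : Ssp d, (inner ℝ (ω : Esp d) z : ℝ) ^ 2 * vonMises d 𝒥 ω ∂(sphMeasure d))
          = ∫ ω : Ssp d, ∑ i, z i * ((ω : Esp d) i * g ω) ∂(sphMeasure d) := by
        congr 1
        funext ω
        have h5 : ∑ i, z i * ((ω : Esp d) i * g ω) = (∑ i, z i * (ω : Esp d) i) * g ω := by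
          rw [Finset.sum_mul]; exact Finset.sum_congr rfl fun i _ => by ring
        rw [h5, ← inner_eq_sum, hg]
        have h7 : (inner ℝ z (ω : Esp d) : ℝ) = inner ℝ (ω : Esp d) z := real_inner_comm _ _
        rw [h7]
        ring
      rw [h6]
      exact hs
    · intro i _
      exact cont_integrable (continuous_const.mul ((contCoord i).mul contg))
  rw [eq_div_iff hμ.ne', mul_comm]
  exact hfin
end

section
/- The function 𝔠(r) := (∫_0^π cos θ · e^{r cos θ} sin^{d−2}θ dθ) / (∫_0^π e^{r cos θ} sin^{d−2}θ dθ) satisfies 𝔠(0) = 0 and 𝔠'(0) = 1/d. -/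
open Real

/-- `𝔠(r) := (∫_0^π cos θ e^{r cos θ} sin^{d−2}θ dθ)/(∫_0^π e^{r cos θ} sin^{d−2}θ dθ)`. -/
noncomputable def cFun (d : ℕ) (r : ℝ) : ℝ :=
  (∫ θ in (0:ℝ)..π, Real.cos θ * Real.exp (r * Real.cos θ) * Real.sin θ ^ (d - 2)) /
  (∫ θ in (0:ℝ)..π, Real.exp (r * Real.cos θ) * Real.sin θ ^ (d - 2))

open MeasureTheory intervalIntegral in
lemma cFun_key (n : ℕ) (g : ℝ → ℝ) (hg : Continuous g) (hb : ∀ θ, |g θ| ≤ 1) :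
    HasDerivAt (fun r => ∫ θ in (0:ℝ)..π, g θ * Real.exp (r * Real.cos θ) * Real.sin θ ^ n)
      (∫ θ in (0:ℝ)..π, g θ * Real.cos θ * Real.sin θ ^ n) 0 := by
  have key := intervalIntegral.hasDerivAt_integral_of_dominated_loc_of_deriv_le
    (F := fun (x : ℝ) (t : ℝ) => g t * Real.exp (x * Real.cos t) * Real.sin t ^ n)
    (F' := fun (x : ℝ) (t : ℝ) => g t * (Real.cos t * Real.exp (x * Real.cos t)) * Real.sin t ^ n)
    (x₀ := (0:ℝ)) (a := (0:ℝ)) (b := π) (μ := volume)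
    (bound := fun _ => Real.exp 1) (s := Metric.ball 0 1) (Metric.ball_mem_nhds 0 one_pos)
    ?_ ?_ ?_ ?_ ?_ ?_
  · have h2 := key.2
    have : (∫ t in (0:ℝ)..π, g t * (Real.cos t * Real.exp (0 * Real.cos t)) * Real.sin t ^ n)
        = ∫ θ in (0:ℝ)..π, g θ * Real.cos θ * Real.sin θ ^ n := by
      simp
    rwa [this] at h2
  · filter_upwards with x
    exact Continuous.aestronglyMeasurable (by fun_prop)
  · exact Continuous.intervalIntegrable (by fun_prop) _ _
  · exact Continuous.aestronglyMeasurable (by fun_prop)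
  · filter_upwards with t _ x hx
    have hxb : |x| < 1 := by simpa [Metric.mem_ball, Real.dist_eq] using hx
    have h1 : |g t| ≤ 1 := hb t
    have h2 : |Real.cos t| ≤ 1 := Real.abs_cos_le_one t
    have h3 : |Real.sin t ^ n| ≤ 1 := by
      rw [abs_pow]; exact pow_le_one₀ (abs_nonneg _) (Real.abs_sin_le_one t)
    have h4 : Real.exp (x * Real.cos t) ≤ Real.exp 1 := by
      apply Real.exp_le_exp.2
      calc x * Real.cos t ≤ |x * Real.cos t| := le_abs_self _
        _ ≤ 1 := by rw [abs_mul]; nlinarith [abs_nonneg x]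
    rw [Real.norm_eq_abs, abs_mul, abs_mul, abs_mul, Real.abs_exp]
    have e1 : |Real.cos t| * Real.exp (x * Real.cos t) ≤ Real.exp 1 := by
      calc |Real.cos t| * Real.exp (x * Real.cos t) ≤ 1 * Real.exp 1 :=
            mul_le_mul h2 h4 (Real.exp_pos _).le zero_le_one
        _ = Real.exp 1 := one_mul _
    have e2 : |g t| * (|Real.cos t| * Real.exp (x * Real.cos t)) ≤ Real.exp 1 := by
      calc |g t| * (|Real.cos t| * Real.exp (x * Real.cos t)) ≤ 1 * Real.exp 1 :=
            mul_le_mul h1 e1 (by positivity) zero_le_one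
        _ = Real.exp 1 := one_mul _
    calc |g t| * (|Real.cos t| * Real.exp (x * Real.cos t)) * |Real.sin t ^ n|
          ≤ Real.exp 1 * 1 := mul_le_mul e2 h3 (abs_nonneg _) (Real.exp_pos 1).le
      _ = Real.exp 1 := mul_one _
  · exact intervalIntegrable_const
  · filter_upwards with t _ x hx
    have : HasDerivAt (fun x : ℝ => x * Real.cos t) (Real.cos t) x := by
      simpa using (hasDerivAt_id x).mul_const (Real.cos t)
    have h := (this.exp.const_mul (g t)).mul_const (Real.sin t ^ n)
    refine h.congr_deriv ?_
    ring

/-- `𝔠(0) = 0` and `𝔠'(0) = 1/d`. -/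
theorem cFun_at_zero (d : ℕ) (hd : 2 ≤ d) :
    cFun d 0 = 0 ∧ HasDerivAt (cFun d) (1 / (d : ℝ)) 0 := by
  set n := d - 2 with hn
  have hdn : (n : ℝ) + 2 = d := by
    have : n + 2 = d := by omega
    exact_mod_cast this
  -- numerator at 0 is 0
  have hN0 : (∫ θ in (0:ℝ)..π, Real.cos θ * Real.sin θ ^ n) = 0 := by
    have := integral_sin_pow_mul_cos_pow_odd (a := 0) (b := π) n 0
    simp only [mul_zero, zero_add, pow_one, Real.sin_zero, Real.sin_pi] at this
    rw [intervalIntegral.integral_congr (g := fun x => Real.sin x ^ n * Real.cos x)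
      (fun x _ => by ring), this]
    simp
  have hD0pos : 0 < ∫ θ in (0:ℝ)..π, Real.sin θ ^ n := integral_sin_pow_pos n
  -- value at 0
  have hval : cFun d 0 = 0 := by
    unfold cFun
    simp only [zero_mul, Real.exp_zero, one_mul, mul_one]
    rw [hN0, zero_div]
  refine ⟨hval, ?_⟩
  -- derivatives of numerator and denominator
  have hNum := cFun_key n Real.cos Real.continuous_cos Real.abs_cos_le_one
  have hDen := cFun_key n (fun _ => 1) continuous_const (fun _ => by norm_num)
  simp only [one_mul] at hDen
  -- simplify values at 0
  have hN0' : (∫ θ in (0:ℝ)..π, Real.cos θ * Real.exp (0 * Real.cos θ) * Real.sin θ ^ n)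
      = 0 := by
    simp only [zero_mul, Real.exp_zero, mul_one]
    exact hN0
  have hD0' : (∫ θ in (0:ℝ)..π, Real.exp (0 * Real.cos θ) * Real.sin θ ^ n)
      = ∫ θ in (0:ℝ)..π, Real.sin θ ^ n := by
    simp
  have hDen' : (∫ θ in (0:ℝ)..π, Real.cos θ * Real.sin θ ^ n) = 0 := hN0
  -- compute ∫ cos² sin^n = (1/(n+2)) ∫ sin^n
  have hcos2 : (∫ θ in (0:ℝ)..π, Real.cos θ * Real.cos θ * Real.sin θ ^ n)
      = (1 / ((n : ℝ) + 2)) * ∫ θ in (0:ℝ)..π, Real.sin θ ^ n := by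
    have hsp : (∫ x in (0:ℝ)..π, Real.sin x ^ (n + 2))
        = ((n : ℝ) + 1) / ((n : ℝ) + 2) * ∫ x in (0:ℝ)..π, Real.sin x ^ n := by
      rw [integral_sin_pow]
      simp
    have hsplit : (∫ θ in (0:ℝ)..π, Real.cos θ * Real.cos θ * Real.sin θ ^ n)
        = (∫ θ in (0:ℝ)..π, Real.sin θ ^ n) - ∫ x in (0:ℝ)..π, Real.sin x ^ (n + 2) := by
      rw [← intervalIntegral.integral_sub (f := fun x => Real.sin x ^ n) (g := fun x => Real.sin x ^ (n + 2))
        ((Real.continuous_sin.pow n : Continuous fun x => Real.sin x ^ n).intervalIntegrable 0 π)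
        ((Real.continuous_sin.pow (n + 2) : Continuous fun x => Real.sin x ^ (n + 2)).intervalIntegrable 0 π)]
      apply intervalIntegral.integral_congr
      intro x _
      simp only []
      have hc : Real.cos x * Real.cos x = 1 - Real.sin x ^ 2 := by
        nlinarith [Real.sin_sq_add_cos_sq x]
      rw [hc]
      ring
    rw [hsplit, hsp]
    field_simp
    ring
  -- assemble derivative via quotient rule
  have hdiv := hNum.div hDen (by rw [hD0']; exact ne_of_gt hD0pos)
  have heq : (fun r => (∫ θ in (0:ℝ)..π, Real.cos θ * Real.exp (r * Real.cos θ) *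
      Real.sin θ ^ n) / ∫ θ in (0:ℝ)..π, Real.exp (r * Real.cos θ) * Real.sin θ ^ n)
      = cFun d := by
    funext r
    unfold cFun
    rw [hn]
  simp only [Pi.div_def] at hdiv
  rw [heq] at hdiv
  refine hdiv.congr_deriv ?_
  rw [hN0', hD0', hDen', hcos2]
  field_simp
  rw [hdn]
  ring
end

section
/- For all r > 0, 0 < 𝔠(r) < 1, where 𝔠(r) := (∫_0^π cos θ · e^{r cos θ} sin^{d−2}θ dθ) / (∫_0^π e^{r cos θ} sin^{d−2}θ dθ). -/
open Real

/-- For all `r > 0`, `0 < 𝔠(r) < 1`. -/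
theorem cFun_pos_lt_one (d : ℕ) (hd : 2 ≤ d) (r : ℝ) (hr : 0 < r) :
    0 < cFun d r ∧ cFun d r < 1 := by
  have hcont1 : Continuous (fun θ : ℝ =>
      Real.cos θ * Real.exp (r * Real.cos θ) * Real.sin θ ^ (d - 2)) := by continuity
  have hcont2 : Continuous (fun θ : ℝ =>
      Real.exp (r * Real.cos θ) * Real.sin θ ^ (d - 2)) := by continuity
  set N := ∫ θ in (0:ℝ)..π, Real.cos θ * Real.exp (r * Real.cos θ) * Real.sin θ ^ (d - 2)
    with hNdef
  set D := ∫ θ in (0:ℝ)..π, Real.exp (r * Real.cos θ) * Real.sin θ ^ (d - 2) with hDdef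
  have hD : 0 < D := by
    apply intervalIntegral.intervalIntegral_pos_of_pos_on
      (hcont2.intervalIntegrable _ _) _ Real.pi_pos
    intro x hx
    have hs : 0 < Real.sin x := Real.sin_pos_of_pos_of_lt_pi hx.1 hx.2
    positivity
  -- rewrite N as an integral over (0, π/2)
  have hsplit : N = ∫ x in (0:ℝ)..(π/2),
      (Real.cos x * Real.exp (r * Real.cos x)
        - Real.cos x * Real.exp (r * -Real.cos x)) * Real.sin x ^ (d - 2) := by
    have h1 : (∫ x in (0:ℝ)..(π/2),
          Real.cos x * Real.exp (r * Real.cos x) * Real.sin x ^ (d - 2))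
        + (∫ x in (π/2:ℝ)..π,
          Real.cos x * Real.exp (r * Real.cos x) * Real.sin x ^ (d - 2)) = N :=
      intervalIntegral.integral_add_adjacent_intervals
        (hcont1.intervalIntegrable _ _) (hcont1.intervalIntegrable _ _)
    have h2 : (∫ x in (π/2:ℝ)..π,
          Real.cos x * Real.exp (r * Real.cos x) * Real.sin x ^ (d - 2))
        = ∫ x in (0:ℝ)..(π/2),
          Real.cos (π - x) * Real.exp (r * Real.cos (π - x)) * Real.sin (π - x) ^ (d - 2) := by
      have := intervalIntegral.integral_comp_sub_left
        (a := (0:ℝ)) (b := π/2)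
        (fun θ : ℝ => Real.cos θ * Real.exp (r * Real.cos θ) * Real.sin θ ^ (d - 2)) π
      have hhalf : π - π / 2 = π / 2 := by ring
      rw [this, hhalf, sub_zero]
    rw [← h1, h2]
    have hcont3 : Continuous (fun x : ℝ =>
        Real.cos (π - x) * Real.exp (r * Real.cos (π - x)) * Real.sin (π - x) ^ (d - 2)) := by
      fun_prop
    rw [← intervalIntegral.integral_add (hcont1.intervalIntegrable _ _)
      (hcont3.intervalIntegrable _ _)]
    apply intervalIntegral.integral_congr
    intro x _
    simp only [Real.cos_pi_sub, Real.sin_pi_sub]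
    ring
  have hN : 0 < N := by
    rw [hsplit]
    apply intervalIntegral.intervalIntegral_pos_of_pos_on
    · exact Continuous.intervalIntegrable (by fun_prop) _ _
    · intro x hx
      have hc : 0 < Real.cos x :=
        Real.cos_pos_of_mem_Ioo ⟨by linarith [hx.1, Real.pi_pos], hx.2⟩
      have hs : 0 < Real.sin x :=
        Real.sin_pos_of_pos_of_lt_pi hx.1 (by linarith [hx.2, Real.pi_pos])
      have hexp : Real.exp (r * -Real.cos x) < Real.exp (r * Real.cos x) := by
        apply Real.exp_lt_exp.2; nlinarith
      have : 0 < Real.cos x * Real.exp (r * Real.cos x)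
          - Real.cos x * Real.exp (r * -Real.cos x) := by nlinarith
      positivity
    · linarith [Real.pi_pos]
  have hND : N < D := by
    have hsub : D - N = ∫ θ in (0:ℝ)..π,
        (1 - Real.cos θ) * Real.exp (r * Real.cos θ) * Real.sin θ ^ (d - 2) := by
      rw [hNdef, hDdef, ← intervalIntegral.integral_sub (hcont2.intervalIntegrable _ _)
        (hcont1.intervalIntegrable _ _)]
      apply intervalIntegral.integral_congr
      intro x _; ring
    have : 0 < D - N := by
      rw [hsub]
      apply intervalIntegral.intervalIntegral_pos_of_pos_on
        (Continuous.intervalIntegrable (by fun_prop) _ _) _ Real.pi_pos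
      intro x hx
      have hs : 0 < Real.sin x := Real.sin_pos_of_pos_of_lt_pi hx.1 hx.2
      have hc : Real.cos x < 1 := by
        nlinarith [Real.sin_sq_add_cos_sq x, Real.cos_le_one x, mul_pos hs hs]
      have h1 : 0 < 1 - Real.cos x := by linarith
      positivity
    linarith
  unfold cFun
  exact ⟨div_pos hN hD, (div_lt_one hD).2 hND⟩
end

section
/- Consider the scalar ODE dL/dt = μ 𝔠(L) − L with initial datum L(0) = L_0 ≥ 0, where 𝔠 satisfies: 𝔠(0) = 0, r ↦ 𝔠(r)/r is strictly decreasing with limit 1/d at 0 and 0 at ∞. If μ ≤ d or L_0 = 0, then L(t) → 0 as t → ∞; if μ > d and L_0 > 0, then L(t) → L_μ, the unique positive solution of L = μ 𝔠(L). -/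
open Filter Set

/-- If a solution of `L' = g (L)` with `g` C¹ hits an equilibrium, it stays there forever. -/
lemma ode_stuck (g : ℝ → ℝ) (hg : ContDiff ℝ 1 g) (e : ℝ) (hge : g e = 0)
    (L : ℝ → ℝ) (t₀ : ℝ) (hode : ∀ t ≥ t₀, HasDerivAt L (g (L t)) t)
    (hL0 : L t₀ = e) : ∀ t ≥ t₀, L t = e := by
  obtain ⟨K, s, hs, hlip⟩ := (hg.contDiffAt (x := e)).exists_lipschitzOnWith
  obtain ⟨ε, hε, hball⟩ := Metric.mem_nhds_iff.1 hs
  have hlip' : LipschitzOnWith K g (Metric.ball e ε) := hlip.mono hball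
  have hcont : ContinuousOn L (Ici t₀) := fun t ht =>
    ((hode t ht).continuousAt).continuousWithinAt
  intro t₁ ht₁
  by_contra hne
  set A := {t ∈ Icc t₀ t₁ | ∀ u ∈ Icc t₀ t, L u = e} with hAdef
  have hAne : t₀ ∈ A := ⟨⟨le_rfl, ht₁⟩, fun u hu => by
    have : u = t₀ := le_antisymm hu.2 hu.1
    rw [this, hL0]⟩
  have hAbdd : BddAbove A := ⟨t₁, fun x hx => hx.1.2⟩
  set m := sSup A with hm
  have hm_ge : t₀ ≤ m := le_csSup hAbdd hAne
  have hm_le : m ≤ t₁ := csSup_le ⟨t₀, hAne⟩ fun x hx => hx.1.2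
  have hpre : ∀ u ∈ Ico t₀ m, L u = e := by
    intro u hu
    obtain ⟨x, hxA, hux⟩ := exists_lt_of_lt_csSup ⟨t₀, hAne⟩ hu.2
    exact hxA.2 u ⟨hu.1, hux.le⟩
  have hLm : L m = e := by
    rcases eq_or_lt_of_le hm_ge with h | h
    · rw [← h, hL0]
    · have hne' : (Ico t₀ m).Nonempty := nonempty_Ico.2 h
      have hmc : m ∈ closure (Ico t₀ m) := by
        rw [closure_Ico h.ne]; exact ⟨hm_ge, le_rfl⟩
      have hnb : (nhdsWithin m (Ico t₀ m)).NeBot :=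
        mem_closure_iff_nhdsWithin_neBot.1 hmc
      have h1 : Tendsto L (nhdsWithin m (Ico t₀ m)) (nhds (L m)) :=
        ((hcont m hm_ge).mono (Ico_subset_Ici_self)).tendsto
      have h2 : Tendsto L (nhdsWithin m (Ico t₀ m)) (nhds e) := by
        apply Tendsto.congr' _ tendsto_const_nhds
        filter_upwards [self_mem_nhdsWithin] with u hu
        exact (hpre u hu).symm
      exact tendsto_nhds_unique h1 h2
  have hmA : m ∈ A := ⟨⟨hm_ge, hm_le⟩, fun u hu =>
    hu.2.eq_or_lt.elim (fun h => h ▸ hLm) fun h => hpre u ⟨hu.1, h⟩⟩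
  have hmlt : m < t₁ := lt_of_le_of_ne hm_le fun h => hne (h ▸ hLm)
  have hca : ContinuousAt L m := (hode m hm_ge).continuousAt
  have hev : ∀ᶠ u in nhds m, L u ∈ Metric.ball e ε := by
    apply hca.preimage_mem_nhds
    rw [hLm] at *
    exact Metric.isOpen_ball.mem_nhds (by rw [hLm]; exact Metric.mem_ball_self hε)
  obtain ⟨δ, hδ, hδball⟩ := Metric.eventually_nhds_iff.1 hev
  set b := min (m + δ/2) t₁ with hb
  have hmb : m < b := lt_min (by linarith) hmlt
  have hbt₁ : b ≤ t₁ := min_le_right _ _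
  have hmemS : ∀ u ∈ Icc m b, L u ∈ Metric.ball e ε := by
    intro u hu
    apply hδball
    rw [Real.dist_eq, abs_lt]
    constructor
    · have := hu.1; linarith
    · have h1 : u ≤ m + δ/2 := le_trans hu.2 (min_le_left _ _)
      linarith
  have heq : EqOn L (fun _ => e) (Icc m b) := by
    apply ODE_solution_unique_of_mem_Icc_right (v := fun _ x => g x)
      (s := fun _ => Metric.ball e ε) (K := K) (fun _ _ => hlip')
      (hcont.mono (Icc_subset_Ici_self.trans (Ici_subset_Ici.2 hm_ge)))
      (fun u hu => (hode u (le_trans hm_ge hu.1)).hasDerivWithinAt)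
      (fun u hu => hmemS u (Ico_subset_Icc_self hu))
      continuousOn_const
      (fun u hu => by simpa [hge] using (hasDerivWithinAt_const u (Ici u) e))
      (fun u hu => Metric.mem_ball_self hε)
      (by simpa using hLm)
  have hbA : b ∈ A := by
    refine ⟨⟨le_trans hm_ge hmb.le, hbt₁⟩, fun u hu => ?_⟩
    rcases le_or_gt u m with h | h
    · exact hmA.2 u ⟨hu.1, h⟩
    · exact heq ⟨h.le, hu.2⟩
  have : b ≤ m := le_csSup hAbdd hbA
  linarith

/-- A function whose derivative is eventually ≤ c < 0 cannot converge. -/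
lemma ode_no_tendsto (L f : ℝ → ℝ) (T c ℓ : ℝ) (hc : c < 0)
    (hd : ∀ t ≥ T, HasDerivAt L (f t) t) (hf : ∀ t ≥ T, f t ≤ c) :
    ¬ Tendsto L atTop (nhds ℓ) := by
  intro hl
  have hanti : AntitoneOn (fun t => L t - c * t) (Ici T) := by
    apply antitoneOn_of_deriv_nonpos (convex_Ici T)
    · intro t ht
      have h2 : HasDerivAt (fun x : ℝ => c * x) c t := by
        simpa using (hasDerivAt_id t).const_mul c
      exact (((hd t ht).sub h2).continuousAt).continuousWithinAt
    · intro t ht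
      rw [interior_Ici] at ht
      have h2 : HasDerivAt (fun x : ℝ => c * x) c t := by
        simpa using (hasDerivAt_id t).const_mul c
      exact (((hd t ht.le).sub h2).differentiableAt).differentiableWithinAt
    · intro t ht
      rw [interior_Ici] at ht
      have h2 : HasDerivAt (fun x : ℝ => c * x) c t := by
        simpa using (hasDerivAt_id t).const_mul c
      have h3 : HasDerivAt (fun t => L t - c * t) (f t - c) t := (hd t ht.le).sub h2
      rw [h3.deriv]
      linarith [hf t ht.le]
  have hle : ∀ t ≥ T, L t ≤ L T - c * T + c * t := by
    intro t ht
    have := hanti (self_mem_Ici) ht ht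
    simp only at this
    linarith
  have hbot : Tendsto L atTop atBot := by
    apply tendsto_atBot_mono' atTop _ _
    · exact fun t => L T - c * T + c * t
    · filter_upwards [eventually_ge_atTop T] with t ht using hle t ht
    · have h1 : Tendsto (fun t : ℝ => c * t) atTop atBot := by
        exact tendsto_id.const_mul_atTop_of_neg hc
      exact tendsto_atBot_add_const_left atTop (L T - c * T) h1
  exact hl.not_tendsto (disjoint_nhds_atBot ℓ) hbot

/-- If a solution of an autonomous ODE converges, the limit is an equilibrium. -/
lemma ode_limit_eq (g : ℝ → ℝ) (hg : Continuous g) (L : ℝ → ℝ) (ℓ : ℝ)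
    (hode : ∀ t ≥ (0:ℝ), HasDerivAt L (g (L t)) t)
    (hl : Tendsto L atTop (nhds ℓ)) : g ℓ = 0 := by
  by_contra hne
  have hcomp : Tendsto (fun t => g (L t)) atTop (nhds (g ℓ)) :=
    (hg.continuousAt.tendsto).comp hl
  rcases lt_or_gt_of_ne hne with hneg | hpos
  · have hev : ∀ᶠ t in atTop, g (L t) ≤ g ℓ / 2 ∧ (0:ℝ) ≤ t := by
      filter_upwards [hcomp.eventually_le_const (by linarith : g ℓ < g ℓ / 2),
        eventually_ge_atTop (0:ℝ)] with t h1 h2 using ⟨h1, h2⟩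
    obtain ⟨T, hT⟩ := hev.exists_forall_of_atTop
    exact ode_no_tendsto L (fun t => g (L t)) T (g ℓ / 2) ℓ (by linarith)
      (fun t ht => hode t (hT t ht).2) (fun t ht => (hT t ht).1) hl
  · have hev : ∀ᶠ t in atTop, -g (L t) ≤ -(g ℓ) / 2 ∧ (0:ℝ) ≤ t := by
      filter_upwards [hcomp.eventually_const_le (by linarith : g ℓ / 2 < g ℓ),
        eventually_ge_atTop (0:ℝ)] with t h1 h2 using ⟨by linarith, h2⟩
    obtain ⟨T, hT⟩ := hev.exists_forall_of_atTop
    exact ode_no_tendsto (fun t => -L t) (fun t => -g (L t)) T (-(g ℓ) / 2) (-ℓ)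
      (by linarith) (fun t ht => (hode t (hT t ht).2).neg) (fun t ht => (hT t ht).1)
      hl.neg

/-- An eventually-antitone bounded-below function converges. -/
lemma tendsto_of_antitoneOn (L : ℝ → ℝ) (e : ℝ)
    (h : AntitoneOn L (Ici (0:ℝ))) (hb : ∀ t ≥ (0:ℝ), e ≤ L t) :
    ∃ ℓ, Tendsto L atTop (nhds ℓ) := by
  set M : ℝ → ℝ := fun t => L (max t 0) with hM
  have hMa : Antitone M := fun s t hst =>
    h (le_max_right s 0) (le_max_right t 0) (max_le_max hst le_rfl)
  have hbdd : BddBelow (range M) := ⟨e, by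
    rintro x ⟨t, rfl⟩; exact hb _ (le_max_right t 0)⟩
  refine ⟨⨅ t, M t, (tendsto_atTop_ciInf hMa hbdd).congr' ?_⟩
  filter_upwards [eventually_ge_atTop (0:ℝ)] with t ht
  simp [hM, max_eq_left ht]

lemma tendsto_of_monotoneOn (L : ℝ → ℝ) (e : ℝ)
    (h : MonotoneOn L (Ici (0:ℝ))) (hb : ∀ t ≥ (0:ℝ), L t ≤ e) :
    ∃ ℓ, Tendsto L atTop (nhds ℓ) := by
  obtain ⟨ℓ, hℓ⟩ := tendsto_of_antitoneOn (fun t => -L t) (-e)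
    (fun s hs t ht hst => neg_le_neg (h hs ht hst))
    (fun t ht => neg_le_neg (hb t ht))
  exact ⟨-ℓ, by simpa using hℓ.neg⟩

/-- Barrier: solution starting at/above an equilibrium stays above it. -/
lemma ode_stays_ge (g : ℝ → ℝ) (hg : ContDiff ℝ 1 g) (e : ℝ) (hge : g e = 0)
    (L : ℝ → ℝ) (hode : ∀ t ≥ (0:ℝ), HasDerivAt L (g (L t)) t) (h0 : e ≤ L 0) :
    ∀ t ≥ (0:ℝ), e ≤ L t := by
  intro t ht
  by_contra hlt
  push_neg at hlt
  have hcont : ContinuousOn L (Icc 0 t) := fun u hu =>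
    ((hode u hu.1).continuousAt).continuousWithinAt
  obtain ⟨s, hs, hLs⟩ := intermediate_value_Icc' ht hcont ⟨hlt.le, h0⟩
  have := ode_stuck g hg e hge L s (fun u hu => hode u (le_trans hs.1 hu)) hLs t hs.2
  linarith

lemma ode_stays_le (g : ℝ → ℝ) (hg : ContDiff ℝ 1 g) (e : ℝ) (hge : g e = 0)
    (L : ℝ → ℝ) (hode : ∀ t ≥ (0:ℝ), HasDerivAt L (g (L t)) t) (h0 : L 0 ≤ e) :
    ∀ t ≥ (0:ℝ), L t ≤ e := by
  intro t ht
  by_contra hlt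
  push_neg at hlt
  have hcont : ContinuousOn L (Icc 0 t) := fun u hu =>
    ((hode u hu.1).continuousAt).continuousWithinAt
  obtain ⟨s, hs, hLs⟩ := intermediate_value_Icc ht hcont ⟨h0, hlt.le⟩
  have := ode_stuck g hg e hge L s (fun u hu => hode u (le_trans hs.1 hu)) hLs t hs.2
  linarith

/-- Monotonicity of solution from sign of `g` along the trajectory. -/
lemma ode_antitoneOn (g : ℝ → ℝ) (L : ℝ → ℝ)
    (hode : ∀ t ≥ (0:ℝ), HasDerivAt L (g (L t)) t)
    (hsign : ∀ t ≥ (0:ℝ), g (L t) ≤ 0) : AntitoneOn L (Ici (0:ℝ)) := by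
  apply antitoneOn_of_deriv_nonpos (convex_Ici 0)
  · exact fun t ht => ((hode t ht).continuousAt).continuousWithinAt
  · intro t ht
    rw [interior_Ici] at ht
    exact ((hode t ht.le).differentiableAt).differentiableWithinAt
  · intro t ht
    rw [interior_Ici] at ht
    rw [(hode t ht.le).deriv]
    exact hsign t ht.le

lemma ode_monotoneOn (g : ℝ → ℝ) (L : ℝ → ℝ)
    (hode : ∀ t ≥ (0:ℝ), HasDerivAt L (g (L t)) t)
    (hsign : ∀ t ≥ (0:ℝ), 0 ≤ g (L t)) : MonotoneOn L (Ici (0:ℝ)) := by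
  apply monotoneOn_of_deriv_nonneg (convex_Ici 0)
  · exact fun t ht => ((hode t ht).continuousAt).continuousWithinAt
  · intro t ht
    rw [interior_Ici] at ht
    exact ((hode t ht.le).differentiableAt).differentiableWithinAt
  · intro t ht
    rw [interior_Ici] at ht
    rw [(hode t ht.le).deriv]
    exact hsign t ht.le

/-- Long-time behaviour of the scalar ODE `L' = μ 𝔠(L) − L`, `L(0) = L₀ ≥ 0`:
if `μ ≤ d` or `L₀ = 0` then `L(t) → 0`, while if `μ > d` and `L₀ > 0` then
`L(t) → L_μ`, the unique positive solution of `L = μ 𝔠(L)`. -/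
theorem ode_flux_modulus_longtime (d : ℕ) (hd : 2 ≤ d) (μ : ℝ) (hμ : 0 < μ)
    (𝔠 : ℝ → ℝ) (hC1 : ContDiff ℝ 1 𝔠)
    (hrange : ∀ r ∈ Ici (0:ℝ), 0 ≤ 𝔠 r ∧ 𝔠 r < 1)
    (h0 : 𝔠 0 = 0)
    (hanti : StrictAntiOn (fun r => 𝔠 r / r) (Ioi 0))
    (hlim0 : Tendsto (fun r => 𝔠 r / r) (nhdsWithin 0 (Ioi 0)) (nhds (1 / (d : ℝ))))
    (hliminf : Tendsto (fun r => 𝔠 r / r) atTop (nhds 0))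
    (L : ℝ → ℝ) (L₀ : ℝ) (hL₀ : 0 ≤ L₀) (hinit : L 0 = L₀)
    (hode : ∀ t ≥ (0:ℝ), HasDerivAt L (μ * 𝔠 (L t) - L t) t) :
    ((μ ≤ d ∨ L₀ = 0) → Tendsto L atTop (nhds 0)) ∧
    ((d < μ ∧ 0 < L₀) →
      ∃ Lμ : ℝ, 0 < Lμ ∧ Lμ = μ * 𝔠 Lμ ∧ Tendsto L atTop (nhds Lμ)) := by
  have hd0 : (0:ℝ) < d := by exact_mod_cast lt_of_lt_of_le (by norm_num) hd
  set g : ℝ → ℝ := fun x => μ * 𝔠 x - x with hgdef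
  have hgC1 : ContDiff ℝ 1 g := (contDiff_const.mul hC1).sub contDiff_id
  have hcontg : Continuous g := hgC1.continuous
  have hg0 : g 0 = 0 := by simp [hgdef, h0]
  have hode' : ∀ t ≥ (0:ℝ), HasDerivAt L (g (L t)) t := hode
  have key0 : ∀ r : ℝ, 0 < r → 𝔠 r / r < 1 / (d : ℝ) := by
    intro r hr
    have hs : (0:ℝ) < r / 2 := by linarith
    have h1 : 𝔠 r / r < 𝔠 (r/2) / (r/2) :=
      hanti (mem_Ioi.2 hs) (mem_Ioi.2 hr) (by linarith)
    have h2 : 𝔠 (r/2) / (r/2) ≤ 1 / (d : ℝ) := by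
      apply ge_of_tendsto hlim0
      filter_upwards [Ioo_mem_nhdsGT_of_mem (left_mem_Ico.2 hs)] with x hx
      exact (hanti (mem_Ioi.2 hx.1) (mem_Ioi.2 hs) hx.2).le
    linarith
  constructor
  · -- Part 1
    intro hcase
    have main : L₀ = 0 ∨ (μ ≤ (d:ℝ) ∧ 0 < L₀) := by
      rcases hcase with h | h
      · rcases eq_or_lt_of_le hL₀ with h' | h'
        · exact Or.inl h'.symm
        · exact Or.inr ⟨h, h'⟩
      · exact Or.inl h
    rcases main with h | ⟨hμd, hL₀pos⟩
    · have hst := ode_stuck g hgC1 0 hg0 L 0 hode' (by rw [hinit, h])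
      apply Tendsto.congr' _ (tendsto_const_nhds (α := ℝ) (x := (0:ℝ)))
      filter_upwards [eventually_ge_atTop (0:ℝ)] with t ht
      exact (hst t ht).symm
    · have hsign1 : ∀ r : ℝ, 0 < r → g r < 0 := by
        intro r hr
        have h1 : 𝔠 r / r < 1 / (d:ℝ) := key0 r hr
        have h2 : (1:ℝ) / d ≤ 1 / μ := one_div_le_one_div_of_le hμ hμd
        have h3 : 𝔠 r / r < 1 / μ := lt_of_lt_of_le h1 h2
        have h4 : 𝔠 r * μ < 1 * r := (div_lt_div_iff₀ hr hμ).mp h3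
        simp only [hgdef]
        nlinarith [h4]
      have hpos : ∀ t ≥ (0:ℝ), 0 ≤ L t :=
        ode_stays_ge g hgC1 0 hg0 L hode' (by rw [hinit]; exact hL₀)
      have hsign : ∀ t ≥ (0:ℝ), g (L t) ≤ 0 := by
        intro t ht
        rcases eq_or_lt_of_le (hpos t ht) with h | h
        · rw [← h, hg0]
        · exact (hsign1 _ h).le
      obtain ⟨ℓ, hℓ⟩ := tendsto_of_antitoneOn L 0 (ode_antitoneOn g L hode' hsign) hpos
      have hgl : g ℓ = 0 := ode_limit_eq g hcontg L ℓ hode' hℓ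
      have hl0 : 0 ≤ ℓ := by
        apply ge_of_tendsto hℓ
        filter_upwards [eventually_ge_atTop (0:ℝ)] with t ht using hpos t ht
      have : ℓ = 0 := by
        rcases eq_or_lt_of_le hl0 with h | h
        · exact h.symm
        · exact absurd hgl (ne_of_lt (hsign1 _ h))
      rwa [this] at hℓ
  · -- Part 2
    rintro ⟨hdμ, hL₀pos⟩
    have hμd : 1 / μ < 1 / (d:ℝ) := one_div_lt_one_div_of_lt hd0 hdμ
    obtain ⟨a, ha1, ha0⟩ :=
      ((hlim0.eventually (eventually_gt_nhds hμd)).and self_mem_nhdsWithin).exists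
    obtain ⟨b, hb1, hab⟩ :=
      ((hliminf.eventually (eventually_lt_nhds (by positivity : (0:ℝ) < 1/μ))).and
        (eventually_ge_atTop a)).exists
    have ha0' : (0:ℝ) < a := ha0
    have hab' : a < b := lt_of_le_of_ne hab (by rintro rfl; exact absurd (ha1.trans hb1) (lt_irrefl _))
    have hcont𝔠 : ContinuousOn (fun r => 𝔠 r / r) (Icc a b) :=
      (hC1.continuous.continuousOn).div continuousOn_id
        (fun x hx => ne_of_gt (lt_of_lt_of_le ha0' hx.1))
    obtain ⟨Lμ, hLμ_mem, hLμ_eq⟩ :=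
      intermediate_value_Icc' hab'.le hcont𝔠 ⟨hb1.le, ha1.le⟩
    replace hLμ_eq : 𝔠 Lμ / Lμ = 1 / μ := hLμ_eq
    have hLμ0 : 0 < Lμ := lt_of_lt_of_le ha0' hLμ_mem.1
    have hfix : Lμ = μ * 𝔠 Lμ := by
      have h := hLμ_eq
      field_simp at h
      linear_combination -h
    have hgLμ : g Lμ = 0 := by simp only [hgdef]; linarith
    have hsignlt : ∀ r : ℝ, 0 < r → r < Lμ → 0 < g r := by
      intro r hr hrL
      have h1 : 𝔠 Lμ / Lμ < 𝔠 r / r := hanti (mem_Ioi.2 hr) (mem_Ioi.2 hLμ0) hrL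
      rw [hLμ_eq] at h1
      have h2 : 1 * r < 𝔠 r * μ := (div_lt_div_iff₀ hμ hr).mp h1
      simp only [hgdef]
      nlinarith [h2]
    have hsigngt : ∀ r : ℝ, Lμ < r → g r < 0 := by
      intro r hrL
      have hr : 0 < r := lt_trans hLμ0 hrL
      have h1 : 𝔠 r / r < 𝔠 Lμ / Lμ := hanti (mem_Ioi.2 hLμ0) (mem_Ioi.2 hr) hrL
      rw [hLμ_eq] at h1
      have h2 : 𝔠 r * μ < 1 * r := (div_lt_div_iff₀ hr hμ).mp h1
      simp only [hgdef]
      nlinarith [h2]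
    refine ⟨Lμ, hLμ0, hfix, ?_⟩
    rcases lt_trichotomy L₀ Lμ with hlt | heq | hgt
    · have hub : ∀ t ≥ (0:ℝ), L t ≤ Lμ :=
        ode_stays_le g hgC1 Lμ hgLμ L hode' (by rw [hinit]; exact hlt.le)
      have hlb : ∀ t ≥ (0:ℝ), 0 ≤ L t :=
        ode_stays_ge g hgC1 0 hg0 L hode' (by rw [hinit]; exact hL₀)
      have hsign : ∀ t ≥ (0:ℝ), 0 ≤ g (L t) := by
        intro t ht
        rcases eq_or_lt_of_le (hlb t ht) with h | h
        · rw [← h, hg0]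
        · rcases eq_or_lt_of_le (hub t ht) with h' | h'
          · rw [h', hgLμ]
          · exact (hsignlt _ h h').le
      have hmono := ode_monotoneOn g L hode' hsign
      obtain ⟨ℓ, hℓ⟩ := tendsto_of_monotoneOn L Lμ hmono hub
      have hgl : g ℓ = 0 := ode_limit_eq g hcontg L ℓ hode' hℓ
      have hℓge : L₀ ≤ ℓ := by
        apply ge_of_tendsto hℓ
        filter_upwards [eventually_ge_atTop (0:ℝ)] with t ht
        calc L₀ = L 0 := hinit.symm
        _ ≤ L t := hmono self_mem_Ici ht ht
      have hℓle : ℓ ≤ Lμ := by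
        apply le_of_tendsto hℓ
        filter_upwards [eventually_ge_atTop (0:ℝ)] with t ht using hub t ht
      have : ℓ = Lμ := by
        rcases eq_or_lt_of_le hℓle with h | h
        · exact h
        · exact absurd hgl (ne_of_gt (hsignlt _ (lt_of_lt_of_le hL₀pos hℓge) h))
      rwa [this] at hℓ
    · have hst := ode_stuck g hgC1 Lμ hgLμ L 0 hode' (by rw [hinit, heq])
      apply Tendsto.congr' _ (tendsto_const_nhds (α := ℝ) (x := Lμ))
      filter_upwards [eventually_ge_atTop (0:ℝ)] with t ht
      exact (hst t ht).symm
    · have hlb : ∀ t ≥ (0:ℝ), Lμ ≤ L t :=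
        ode_stays_ge g hgC1 Lμ hgLμ L hode' (by rw [hinit]; exact hgt.le)
      have hsign : ∀ t ≥ (0:ℝ), g (L t) ≤ 0 := by
        intro t ht
        rcases eq_or_lt_of_le (hlb t ht) with h | h
        · rw [← h, hgLμ]
        · exact (hsigngt _ h).le
      obtain ⟨ℓ, hℓ⟩ := tendsto_of_antitoneOn L Lμ (ode_antitoneOn g L hode' hsign) hlb
      have hgl : g ℓ = 0 := ode_limit_eq g hcontg L ℓ hode' hℓ
      have hℓge : Lμ ≤ ℓ := by
        apply ge_of_tendsto hℓ
        filter_upwards [eventually_ge_atTop (0:ℝ)] with t ht using hlb t ht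
      have : ℓ = Lμ := by
        rcases eq_or_lt_of_le hℓge with h | h
        · exact h.symm
        · exact absurd hgl (ne_of_lt (hsigngt _ h))
      rwa [this] at hℓ
end

section
/- Let k ∈ ℝ^d with |k| ≥ γ > 0, let z = x + iy with x ≥ 0, and define c_1(z,k) := ∫_{S^{d-1}} ω_1 M_0(ω) / (1 + z + i|k|ω_1) dω, where M_0 is the uniform density. Then |c_1| ≤ 1/(2√d) + 1/|k|. -/
open MeasureTheory Metric

/-- The uniform probability density `M_0 = |S^{d-1}|⁻¹` on the sphere. -/
noncomputable def uniformDensity (d : ℕ) : ℝ :=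
  ((sphMeasure d) Set.univ).toReal⁻¹

section Aux

open Set Pointwise

instance inst_s13 (d : ℕ) : IsFiniteMeasure (sphMeasure d) :=
  inferInstanceAs (IsFiniteMeasure (volume : Measure (EuclideanSpace ℝ (Fin d))).toSphere)

variable {d : ℕ}

/-- The map on the unit sphere induced by a linear isometry equivalence. -/
noncomputable def sphereMap (e : EuclideanSpace ℝ (Fin d) ≃ₗᵢ[ℝ] EuclideanSpace ℝ (Fin d))
    (ω : sphere (0 : EuclideanSpace ℝ (Fin d)) 1) : sphere (0 : EuclideanSpace ℝ (Fin d)) 1 :=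
  ⟨e ω, by
    have := ω.2
    simp only [mem_sphere_iff_norm, sub_zero] at this ⊢
    simp [this]⟩

lemma sphereMap_measurePreserving (e : EuclideanSpace ℝ (Fin d) ≃ₗᵢ[ℝ] EuclideanSpace ℝ (Fin d)) :
    MeasurePreserving (sphereMap e) (sphMeasure d) (sphMeasure d) := by
  have hcont : Continuous (sphereMap e) :=
    Continuous.subtype_mk (e.continuous.comp continuous_subtype_val) _
  refine ⟨hcont.measurable, ?_⟩
  ext s hs
  rw [Measure.map_apply hcont.measurable hs]
  have hps : MeasurableSet (sphereMap e ⁻¹' s) := hcont.measurable hs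
  rw [sphMeasure, Measure.toSphere_apply' _ hs, Measure.toSphere_apply' _ hps]
  congr 1
  have himg : (Subtype.val '' (sphereMap e ⁻¹' s)) = e.symm '' (Subtype.val '' s) := by
    ext x
    constructor
    · rintro ⟨ω, hω, rfl⟩
      exact ⟨e ω.1, ⟨sphereMap e ω, hω, rfl⟩, by simp⟩
    · rintro ⟨y, ⟨σ, hσ, rfl⟩, rfl⟩
      have hmem : e.symm σ.1 ∈ sphere (0 : EuclideanSpace ℝ (Fin d)) 1 := by
        have := σ.2
        simp only [mem_sphere_iff_norm, sub_zero] at this ⊢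
        simp [this]
      refine ⟨⟨e.symm σ.1, hmem⟩, ?_, rfl⟩
      show sphereMap e _ ∈ s
      have heq : sphereMap e ⟨e.symm σ.1, hmem⟩ = σ := by
        apply Subtype.ext; simp [sphereMap]
      rw [heq]; exact hσ
  rw [himg]
  have hsmul : (Ioo (0:ℝ) 1) • (e.symm '' (Subtype.val '' s))
      = e.symm '' ((Ioo (0:ℝ) 1) • (Subtype.val '' s)) := by
    rw [← Set.iUnion_smul_set, ← Set.iUnion_smul_set, Set.image_iUnion₂]
    refine Set.iUnion₂_congr fun r hr => ?_
    exact (Set.image_smul_comm _ _ _ (fun x => e.symm.map_smul r x)).symm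
  rw [hsmul]
  have himg2 : ⇑e.symm '' ((Ioo (0:ℝ) 1) • (Subtype.val '' s))
      = ⇑e ⁻¹' ((Ioo (0:ℝ) 1) • (Subtype.val '' s)) := by
    ext x
    simp only [Set.mem_image, Set.mem_preimage]
    constructor
    · rintro ⟨y, hy, rfl⟩; simpa using hy
    · intro hx; exact ⟨e x, hx, by simp⟩
  rw [himg2]
  exact (e.measurePreserving).measure_preimage_emb
    (e.toMeasurableEquiv.measurableEmbedding) ((Ioo (0:ℝ) 1) • (Subtype.val '' s))

/-- `sphereMap` as a measurable equivalence. -/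
noncomputable def sphereMapEquiv (e : EuclideanSpace ℝ (Fin d) ≃ₗᵢ[ℝ] EuclideanSpace ℝ (Fin d)) :
    sphere (0 : EuclideanSpace ℝ (Fin d)) 1 ≃ᵐ sphere (0 : EuclideanSpace ℝ (Fin d)) 1 where
  toFun := sphereMap e
  invFun := sphereMap e.symm
  left_inv := fun ω => Subtype.ext (by simp [sphereMap])
  right_inv := fun ω => Subtype.ext (by simp [sphereMap])
  measurable_toFun := (Continuous.subtype_mk (e.continuous.comp continuous_subtype_val) _).measurable
  measurable_invFun :=
    (Continuous.subtype_mk (e.symm.continuous.comp continuous_subtype_val) _).measurable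

lemma sphereMap_integral {F : Type*} [NormedAddCommGroup F] [NormedSpace ℝ F]
    (e : EuclideanSpace ℝ (Fin d) ≃ₗᵢ[ℝ] EuclideanSpace ℝ (Fin d))
    (f : sphere (0 : EuclideanSpace ℝ (Fin d)) 1 → F) :
    ∫ ω, f (sphereMap e ω) ∂(sphMeasure d) = ∫ ω, f ω ∂(sphMeasure d) :=
  MeasurePreserving.integral_comp' (f := sphereMapEquiv e) (sphereMap_measurePreserving e) f

lemma integrable_of_bounded {F : Type*} [NormedAddCommGroup F] [NormedSpace ℝ F]
    (f : sphere (0 : EuclideanSpace ℝ (Fin d)) 1 → F) (hf : Continuous f) (C : ℝ)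
    (h : ∀ ω, ‖f ω‖ ≤ C) : Integrable f (sphMeasure d) :=
  (integrable_const C).mono' hf.aestronglyMeasurable (Filter.Eventually.of_forall h)

lemma abs_coord_le_norm (x : EuclideanSpace ℝ (Fin d)) (i : Fin d) : |x i| ≤ ‖x‖ := by
  rw [EuclideanSpace.norm_eq, ← Real.sqrt_sq_eq_abs]
  apply Real.sqrt_le_sqrt
  simp only [Real.norm_eq_abs, sq_abs]
  exact Finset.single_le_sum (f := fun j => x j ^ 2) (fun j _ => sq_nonneg _) (Finset.mem_univ i)

lemma abs_coord_le_one (ω : sphere (0 : EuclideanSpace ℝ (Fin d)) 1) (i : Fin d) :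
    |(ω : EuclideanSpace ℝ (Fin d)) i| ≤ 1 := by
  have h : ‖(ω : EuclideanSpace ℝ (Fin d))‖ = 1 := by simpa using ω.2
  simpa [h] using abs_coord_le_norm (ω : EuclideanSpace ℝ (Fin d)) i

lemma continuous_coord (i : Fin d) : Continuous (fun ω : sphere (0 : EuclideanSpace ℝ (Fin d)) 1 =>
    (ω : EuclideanSpace ℝ (Fin d)) i) :=
  ((continuous_apply i).comp (PiLp.continuous_ofLp 2 _)).comp continuous_subtype_val

lemma sum_sq_coord (ω : sphere (0 : EuclideanSpace ℝ (Fin d)) 1) :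
    ∑ i, ((ω : EuclideanSpace ℝ (Fin d)) i)^2 = 1 := by
  have h : ‖(ω : EuclideanSpace ℝ (Fin d))‖ = 1 := by simpa using ω.2
  have h2 := EuclideanSpace.norm_eq (ω : EuclideanSpace ℝ (Fin d))
  rw [h] at h2
  have h3 := congrArg (· ^ 2) h2.symm
  simp only [Real.norm_eq_abs, sq_abs] at h3
  simpa [Real.sq_sqrt (Finset.sum_nonneg fun i _ =>
    sq_nonneg ((ω : EuclideanSpace ℝ (Fin d)) i))] using h3

lemma integrable_coord_sq (j : Fin d) :
    Integrable (fun ω : sphere (0 : EuclideanSpace ℝ (Fin d)) 1 =>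
      ((ω : EuclideanSpace ℝ (Fin d)) j)^2) (sphMeasure d) :=
  integrable_of_bounded _ ((continuous_coord j).pow 2) 1 (fun ω => by
    have := abs_coord_le_one ω j
    rw [Real.norm_eq_abs, abs_pow]
    calc |(ω : EuclideanSpace ℝ (Fin d)) j| ^ 2 ≤ 1^2 :=
          pow_le_pow_left₀ (abs_nonneg _) this 2
      _ = 1 := one_pow 2)

/-- The integral of a squared coordinate over the sphere. -/
lemma integral_coord_sq (hd : 0 < d) (i : Fin d) :
    ∫ ω : sphere (0 : EuclideanSpace ℝ (Fin d)) 1,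
      ((ω : EuclideanSpace ℝ (Fin d)) i)^2 ∂(sphMeasure d)
    = ((sphMeasure d) Set.univ).toReal / d := by
  set μ := sphMeasure d
  have hswap : ∀ j : Fin d, (∫ ω, ((ω : EuclideanSpace ℝ (Fin d)) j)^2 ∂μ)
      = ∫ ω, ((ω : EuclideanSpace ℝ (Fin d)) i)^2 ∂μ := by
    intro j
    set e : EuclideanSpace ℝ (Fin d) ≃ₗᵢ[ℝ] EuclideanSpace ℝ (Fin d) :=
      LinearIsometryEquiv.piLpCongrLeft 2 ℝ ℝ (Equiv.swap i j)
    have key := sphereMap_integral e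
      (fun ω : sphere (0 : EuclideanSpace ℝ (Fin d)) 1 => ((ω : EuclideanSpace ℝ (Fin d)) j)^2)
    have hco : ∀ ω : sphere (0 : EuclideanSpace ℝ (Fin d)) 1,
        ((sphereMap e ω : EuclideanSpace ℝ (Fin d)) j) = (ω : EuclideanSpace ℝ (Fin d)) i := by
      intro ω
      show (e (ω : EuclideanSpace ℝ (Fin d))) j = _
      rw [LinearIsometryEquiv.piLpCongrLeft_apply]
      simp only [Equiv.piCongrLeft', Equiv.coe_fn_mk, Equiv.symm_swap]
      rw [Equiv.swap_apply_right]
    rw [← key]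
    congr 1
    ext ω
    rw [hco ω]
  have hsum : ∑ j : Fin d, (∫ ω, ((ω : EuclideanSpace ℝ (Fin d)) j)^2 ∂μ)
      = (μ Set.univ).toReal := by
    rw [← integral_finset_sum _ (fun j _ => integrable_coord_sq j)]
    rw [integral_congr_ae (Filter.Eventually.of_forall fun ω => sum_sq_coord ω)]
    simp [integral_const]
    rfl
  rw [Finset.sum_congr rfl (fun j _ => hswap j), Finset.sum_const, Finset.card_univ,
    Fintype.card_fin, nsmul_eq_mul] at hsum
  have hd' : (0:ℝ) < d := by exact_mod_cast hd
  field_simp at hsum ⊢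
  linarith [hsum]

lemma integrable_abs_coord (i : Fin d) :
    Integrable (fun ω : sphere (0 : EuclideanSpace ℝ (Fin d)) 1 =>
      |(ω : EuclideanSpace ℝ (Fin d)) i|) (sphMeasure d) :=
  integrable_of_bounded _ (continuous_coord i).abs 1 (fun ω => by
    rw [Real.norm_eq_abs, abs_abs]; exact abs_coord_le_one ω i)

/-- Jensen-type bound `∫ |ω_i| M₀ ≤ 1/√d` (in unnormalized form). -/
lemma integral_abs_coord_le (hd : 0 < d) (i : Fin d) :
    ∫ ω : sphere (0 : EuclideanSpace ℝ (Fin d)) 1,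
      |(ω : EuclideanSpace ℝ (Fin d)) i| ∂(sphMeasure d)
    ≤ ((sphMeasure d) Set.univ).toReal / Real.sqrt d := by
  set μ := sphMeasure d
  set V := (μ Set.univ).toReal with hV
  have hVnn : 0 ≤ V := ENNReal.toReal_nonneg
  have hd' : (0:ℝ) < d := by exact_mod_cast hd
  set s := Real.sqrt d with hs
  have hs0 : 0 < s := Real.sqrt_pos.2 hd'
  have hs2 : s^2 = d := Real.sq_sqrt hd'.le
  have hpt : ∀ ω : sphere (0 : EuclideanSpace ℝ (Fin d)) 1,
      |(ω : EuclideanSpace ℝ (Fin d)) i|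
        ≤ (s/2) * ((ω : EuclideanSpace ℝ (Fin d)) i)^2 + 1/(2*s) := by
    intro ω
    set t := (ω : EuclideanSpace ℝ (Fin d)) i
    have h1 : 0 ≤ (s * |t| - 1)^2 := sq_nonneg _
    have h2 : t^2 = |t|^2 := (sq_abs t).symm
    rw [h2]
    have h3 : 2 * s * |t| ≤ s^2 * |t|^2 + 1 := by nlinarith [h1]
    have h4 : |t| ≤ (s^2 * |t|^2 + 1) / (2 * s) := by
      rw [le_div_iff₀ (by positivity)]; linarith
    calc |t| ≤ (s^2 * |t|^2 + 1) / (2 * s) := h4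
      _ = s / 2 * |t|^2 + 1 / (2 * s) := by field_simp
  have hint2 : Integrable (fun ω : sphere (0 : EuclideanSpace ℝ (Fin d)) 1 =>
      (s/2) * ((ω : EuclideanSpace ℝ (Fin d)) i)^2 + 1/(2*s)) μ :=
    ((integrable_coord_sq i).const_mul _).add (integrable_const _)
  calc ∫ ω, |(ω : EuclideanSpace ℝ (Fin d)) i| ∂μ
      ≤ ∫ ω, ((s/2) * ((ω : EuclideanSpace ℝ (Fin d)) i)^2 + 1/(2*s)) ∂μ :=
        integral_mono (integrable_abs_coord i) hint2 hpt
    _ = (s/2) * (V / d) + (1/(2*s)) * V := by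
        rw [integral_add ((integrable_coord_sq i).const_mul _) (integrable_const _),
          integral_const_mul, integral_coord_sq hd i, integral_const]
        simp [hV, smul_eq_mul, Measure.real]
        ring
    _ = V / s := by
        have hds : (d:ℝ) = s^2 := hs2.symm
        rw [hds]
        field_simp
        ring

lemma sphMeasure_univ_pos (hd : 0 < d) : 0 < ((sphMeasure d) Set.univ).toReal := by
  apply ENNReal.toReal_pos
  · rw [sphMeasure, Measure.toSphere_apply_univ]
    refine mul_ne_zero ?_ ?_
    · simp only [ne_eq, Nat.cast_eq_zero]
      rw [finrank_euclideanSpace_fin]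
      omega
    · exact (measure_ball_pos volume 0 one_pos).ne'
  · exact measure_ne_top _ _

/-! ### The elementary key inequality -/

lemma key_ineq_aux (y c D1 D2 : ℝ) (hc : 0 ≤ c) (h11 : 1 ≤ D1) (h21 : 1 ≤ D2)
    (h12 : |y + c| ≤ D1) (h22 : |y - c| ≤ D2) : 2 * c^2 ≤ (c + 2) * (D1 * D2) := by
  rcases abs_le.1 h12 with ⟨h12a, h12b⟩
  rcases abs_le.1 h22 with ⟨h22a, h22b⟩
  rcases le_or_gt c 1 with hc1 | hc1
  · nlinarith [mul_le_mul h11 h21 zero_le_one (le_trans zero_le_one h11)]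
  · have hprod : 2 * c - 1 ≤ D1 * D2 := by
      rcases le_or_gt (c - 1) y with hy1 | hy1
      · nlinarith
      · rcases le_or_gt y (-(c-1)) with hy2 | hy2
        · nlinarith
        · have hA : c - y ≤ D2 := by linarith
          have h1 : (y + c) * (c - y) ≤ D1 * D2 :=
            mul_le_mul h12b hA (by linarith) (by linarith)
          nlinarith [h1, mul_nonneg (by linarith : (0:ℝ) ≤ c - 1 - y)
            (by linarith : (0:ℝ) ≤ c - 1 + y)]
    nlinarith

lemma key_ineq (y c D1 D2 : ℝ) (h11 : 1 ≤ D1) (h21 : 1 ≤ D2)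
    (h12 : |y + c| ≤ D1) (h22 : |y - c| ≤ D2) : 2 * c^2 ≤ (|c| + 2) * (D1 * D2) := by
  rcases le_or_gt 0 c with hc | hc
  · rw [abs_of_nonneg hc]; exact key_ineq_aux y c D1 D2 hc h11 h21 h12 h22
  · rw [abs_of_neg hc]
    have := key_ineq_aux (-y) (-c) D1 D2 (by linarith) h11 h21
      (by rw [show -y + -c = -(y+c) by ring, abs_neg]; exact h12)
      (by rw [show -y - -c = -(y-c) by ring, abs_neg]; exact h22)
    nlinarith [this]

/-- The symmetrized pointwise bound. -/
lemma pointwise_bound (z : ℂ) (hz : 0 ≤ z.re) (a t M : ℝ) (ha : 0 < a) (hM : 0 ≤ M) :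
    ‖((t * M : ℝ) : ℂ) / (1 + z + Complex.I * (a * t))
      + (((-t) * M : ℝ) : ℂ) / (1 + z + Complex.I * (a * (-t)))‖
    ≤ M * (|t| + 2 / a) := by
  set A : ℂ := 1 + z + Complex.I * (a * t) with hA
  set B : ℂ := 1 + z + Complex.I * (a * (-t)) with hB
  have hAre : A.re = 1 + z.re := by simp [hA]
  have hBre : B.re = 1 + z.re := by simp [hB]
  have hAim : A.im = z.im + a * t := by simp [hA]
  have hBim : B.im = z.im - a * t := by simp [hB]; ring
  have hA1 : 1 ≤ ‖A‖ :=
    le_trans (by rw [hAre, abs_of_nonneg (by linarith)]; linarith) (Complex.abs_re_le_norm A)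
  have hB1 : 1 ≤ ‖B‖ :=
    le_trans (by rw [hBre, abs_of_nonneg (by linarith)]; linarith) (Complex.abs_re_le_norm B)
  have h12 : |z.im + a * t| ≤ ‖A‖ := by rw [← hAim]; exact Complex.abs_im_le_norm A
  have h22 : |z.im - a * t| ≤ ‖B‖ := by rw [← hBim]; exact Complex.abs_im_le_norm B
  have hkey := key_ineq z.im (a * t) _ _ hA1 hB1 h12 h22
  have hA0 : A ≠ 0 := fun h => by rw [h] at hA1; simp at hA1; linarith
  have hB0 : B ≠ 0 := fun h => by rw [h] at hB1; simp at hB1; linarith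
  have hBA : B - A = (-(2 * a * t) : ℝ) * Complex.I := by
    rw [hA, hB]; push_cast; ring
  have hsum : ((t * M : ℝ) : ℂ) / A + (((-t) * M : ℝ) : ℂ) / B
      = ((t * M : ℝ) : ℂ) * (B - A) / (A * B) := by
    field_simp
    push_cast; ring
  rw [hsum, hBA, norm_div, norm_mul, norm_mul, Complex.norm_I, Complex.norm_real,
    Complex.norm_real, Real.norm_eq_abs, Real.norm_eq_abs, norm_mul, mul_one]
  have hD0 : 0 < ‖A‖ * ‖B‖ := by positivity
  rw [div_le_iff₀ hD0]
  have hgoal2 : |t * M| * |-(2 * a * t)| = |t| * M * (2 * (a * |t|)) := by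
    rw [abs_mul, abs_neg, abs_mul, abs_mul, abs_of_pos ha, abs_of_nonneg hM, abs_two]; ring
  rw [hgoal2]
  rw [abs_mul, abs_of_pos ha] at hkey
  set s := |t| with hs
  have hts : t ^ 2 = s ^ 2 := (sq_abs t).symm
  have h2 : 2 * (a * t)^2 = 2 * a^2 * s^2 := by rw [mul_pow, hts]; ring
  rw [h2] at hkey
  set D := ‖A‖ * ‖B‖ with hD
  have hid : M * (s + 2 / a) * D - s * M * (2 * (a * s))
      = (M / a) * ((a * s + 2) * D - 2 * a^2 * s^2) := by
    field_simp
  nlinarith [mul_le_mul_of_nonneg_left hkey (div_nonneg hM ha.le), hid]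

end Aux

/-- Estimate of `c₁(z,k) = ∫ ω₁ M₀/(1+z+i|k|ω₁) dω`: for `Re z ≥ 0` and `|k| > 0`,
`|c₁| ≤ 1/(2√d) + 1/|k|`. -/
theorem c1_estimate (d : ℕ) (hd : 2 ≤ d) (z : ℂ) (hz : 0 ≤ z.re)
    (k : EuclideanSpace ℝ (Fin d)) (hk : 0 < ‖k‖) :
    ‖(∫ ω : sphere (0 : EuclideanSpace ℝ (Fin d)) 1,
          (((ω : EuclideanSpace ℝ (Fin d)) ⟨0, by omega⟩ * uniformDensity d : ℝ) : ℂ) /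
            (1 + z + Complex.I * (‖k‖ * (ω : EuclideanSpace ℝ (Fin d)) ⟨0, by omega⟩))
          ∂(sphMeasure d))‖ ≤
      1 / (2 * Real.sqrt d) + 1 / ‖k‖ := by
  have hd0 : 0 < d := by omega
  set i0 : Fin d := ⟨0, hd0⟩ with hi0
  set μ := sphMeasure d with hμ
  set V := (μ Set.univ).toReal with hV
  have hVpos : 0 < V := sphMeasure_univ_pos hd0
  set M := uniformDensity d with hM
  have hMV : M * V = 1 := by
    rw [hM, uniformDensity, ← hμ, ← hV]
    exact inv_mul_cancel₀ hVpos.ne'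
  have hMpos : 0 < M := by
    rw [hM, uniformDensity, ← hμ, ← hV]
    exact inv_pos.2 hVpos
  set a := ‖k‖ with ha
  set g : sphere (0 : EuclideanSpace ℝ (Fin d)) 1 → ℂ := fun ω =>
    (((ω : EuclideanSpace ℝ (Fin d)) i0 * M : ℝ) : ℂ) /
      (1 + z + Complex.I * (a * (ω : EuclideanSpace ℝ (Fin d)) i0)) with hg
  show ‖∫ ω, g ω ∂μ‖ ≤ 1 / (2 * Real.sqrt d) + 1 / a
  -- the reflection isometry in the first coordinate
  set e : EuclideanSpace ℝ (Fin d) ≃ₗᵢ[ℝ] EuclideanSpace ℝ (Fin d) :=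
    LinearIsometryEquiv.piLpCongrRight 2
      (fun i : Fin d => if i = i0 then LinearIsometryEquiv.neg ℝ
        else LinearIsometryEquiv.refl ℝ ℝ) with he
  have hco : ∀ x : EuclideanSpace ℝ (Fin d), (e x) i0 = - x i0 := by
    intro x
    rw [he, LinearIsometryEquiv.piLpCongrRight_apply]
    show (if i0 = i0 then LinearIsometryEquiv.neg ℝ else LinearIsometryEquiv.refl ℝ ℝ) (x i0) = _
    rw [if_pos rfl]
    rfl
  -- denominators are bounded below by 1
  have hden : ∀ t : ℝ, 1 ≤ ‖1 + z + Complex.I * (a * t)‖ := by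
    intro t
    refine le_trans ?_ (Complex.abs_re_le_norm _)
    have : (1 + z + Complex.I * ((a:ℂ) * (t:ℝ))).re = 1 + z.re := by simp
    rw [this, abs_of_nonneg (by linarith)]
    linarith
  have hden0 : ∀ t : ℝ, (1 + z + Complex.I * ((a:ℂ) * (t:ℝ))) ≠ 0 := by
    intro t h
    have := hden t
    rw [h] at this; simp at this; linarith
  -- continuity and integrability of g
  have hgcont : Continuous g := by
    rw [hg]
    apply Continuous.div
    · exact Complex.continuous_ofReal.comp ((continuous_coord i0).mul continuous_const)
    · exact continuous_const.add (continuous_const.mul (continuous_const.mul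
        (Complex.continuous_ofReal.comp (continuous_coord i0))))
    · intro ω; exact hden0 _
  have hgnorm : ∀ ω, ‖g ω‖ ≤ M := by
    intro ω
    rw [hg]
    simp only [norm_div, Complex.norm_real, Real.norm_eq_abs]
    rw [div_le_iff₀ (lt_of_lt_of_le one_pos (hden _))]
    calc |(ω : EuclideanSpace ℝ (Fin d)) i0 * M|
        = |(ω : EuclideanSpace ℝ (Fin d)) i0| * M := by
          rw [abs_mul, abs_of_pos hMpos]
      _ ≤ 1 * M := by
          exact mul_le_mul_of_nonneg_right (abs_coord_le_one ω i0) hMpos.le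
      _ = M * 1 := by ring
      _ ≤ M * ‖1 + z + Complex.I * (a * (ω : EuclideanSpace ℝ (Fin d)) i0)‖ :=
          mul_le_mul_of_nonneg_left (hden _) hMpos.le
  have hgint : Integrable g μ := integrable_of_bounded g hgcont M hgnorm
  have hgRint : Integrable (fun ω => g (sphereMap e ω)) μ :=
    integrable_of_bounded _ (hgcont.comp
      (Continuous.subtype_mk (e.continuous.comp continuous_subtype_val) _))
      M (fun ω => hgnorm _)
  -- symmetrization
  have hR : ∫ ω, g (sphereMap e ω) ∂μ = ∫ ω, g ω ∂μ := sphereMap_integral e g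
  have h2I : ∫ ω, (g ω + g (sphereMap e ω)) ∂μ = (2 : ℂ) * ∫ ω, g ω ∂μ := by
    rw [integral_add hgint hgRint, hR, two_mul]
  -- the pointwise bound
  have hbound : ∀ ω : sphere (0 : EuclideanSpace ℝ (Fin d)) 1,
      ‖g ω + g (sphereMap e ω)‖ ≤ M * |(ω : EuclideanSpace ℝ (Fin d)) i0| + 2 * M / a := by
    intro ω
    set t := (ω : EuclideanSpace ℝ (Fin d)) i0 with ht
    have h0 : ((sphereMap e ω : EuclideanSpace ℝ (Fin d)) i0) = -t := hco _
    have hgR : g (sphereMap e ω) = (((-t) * M : ℝ) : ℂ) /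
        (1 + z + Complex.I * (a * (-t))) := by
      simp only [hg, h0]
      norm_cast
    have hgO : g ω = ((t * M : ℝ) : ℂ) / (1 + z + Complex.I * (a * t)) := rfl
    rw [hgO, hgR]
    exact (pointwise_bound z hz a t M hk hMpos.le).trans_eq (by ring)
  have hbint : Integrable (fun ω : sphere (0 : EuclideanSpace ℝ (Fin d)) 1 =>
      M * |(ω : EuclideanSpace ℝ (Fin d)) i0| + 2 * M / a) μ :=
    (((integrable_abs_coord i0).const_mul M).add (integrable_const _))
  have hsd : 0 < Real.sqrt d := Real.sqrt_pos.2 (by exact_mod_cast hd0)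
  -- final chain
  have hmain : ‖∫ ω, g ω ∂μ‖
      ≤ (1/2) * (M * (V / Real.sqrt d) + 2 * M / a * V) := by
    have h1 : ‖∫ ω, g ω ∂μ‖
        = (1/2) * ‖∫ ω, (g ω + g (sphereMap e ω)) ∂μ‖ := by
      rw [h2I, norm_mul, Complex.norm_two]
      ring
    rw [h1]
    have h2 : ‖∫ ω, (g ω + g (sphereMap e ω)) ∂μ‖
        ≤ ∫ ω, ‖g ω + g (sphereMap e ω)‖ ∂μ := by
      exact norm_integral_le_integral_norm _
    have h3 : ∫ ω, ‖g ω + g (sphereMap e ω)‖ ∂μ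
        ≤ ∫ ω, (M * |(ω : EuclideanSpace ℝ (Fin d)) i0| + 2 * M / a) ∂μ :=
      integral_mono (hgint.add hgRint).norm hbint hbound
    have h4 : ∫ ω, (M * |(ω : EuclideanSpace ℝ (Fin d)) i0| + 2 * M / a) ∂μ
        ≤ M * (V / Real.sqrt d) + 2 * M / a * V := by
      rw [integral_add ((integrable_abs_coord i0).const_mul M) (integrable_const _),
        integral_const_mul, integral_const]
      have h5 := integral_abs_coord_le hd0 i0
      rw [← hμ, ← hV] at h5
      have h6 : M * (∫ ω, |(ω : EuclideanSpace ℝ (Fin d)) i0| ∂μ) ≤ M * (V / Real.sqrt d) :=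
        mul_le_mul_of_nonneg_left h5 hMpos.le
      simp only [smul_eq_mul, Measure.real, ← hV]
      linarith [h6]
    have hhalf : (0:ℝ) ≤ 1/2 := by norm_num
    calc (1/2) * ‖∫ ω, (g ω + g (sphereMap e ω)) ∂μ‖
        ≤ (1/2) * (∫ ω, ‖g ω + g (sphereMap e ω)‖ ∂μ) := mul_le_mul_of_nonneg_left h2 hhalf
      _ ≤ (1/2) * (∫ ω, (M * |(ω : EuclideanSpace ℝ (Fin d)) i0| + 2 * M / a) ∂μ) :=
          mul_le_mul_of_nonneg_left h3 hhalf
      _ ≤ (1/2) * (M * (V / Real.sqrt d) + 2 * M / a * V) :=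
          mul_le_mul_of_nonneg_left h4 hhalf
  refine hmain.trans ?_
  have : (1/2) * (M * (V / Real.sqrt d) + 2 * M / a * V)
      = (M * V) * (1 / (2 * Real.sqrt d)) + (M * V) * (1 / a) := by
    field_simp
  rw [this, hMV]
  simp
end
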